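/- arXiv:2106.09606 — 14 statements merged into one kernel-verified Lean document; each statement's English description precedes it below -/
import Mathlib

section
/- Let A be the 2×2 real matrix with rows (0,1) and (1,2), let b = (1,0)ᵀ ∈ ℝ², and let f(x) = ‖Ax − b‖₂² for x ∈ ℝ². Then the vector x̂₁ = (0, 1/5)ᵀ satisfies all of the following: (a) x̂₁ minimizes f(x) over {x ∈ ℝ² : ‖x‖₀ ≤ 1}; (b) x̂₁ minimizes ‖x‖₀ over {x ∈ ℝ² : f(x) ≤ 4/5}; (c) for every λ > 0, x̂₁ does NOT minimize ‖x‖₀ + (1/λ)·f(x) over ℝ². In particular, the converse implications in Proposition 1.1(i) fail: a solution that is optimal for both the cardinality-constrained and the cardinality-minimization problem need not be optimal for the regularized problem for any λ > 0. -/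
/-- The number of nonzero entries of a vector (the "ℓ₀-norm"). -/
noncomputable def card0 {n : ℕ} (x : Fin n → ℝ) : ℕ := {i | x i ≠ 0}.ncard

lemma card0_two_of (x : Fin 2 → ℝ) (h0 : x 0 ≠ 0) (h1 : x 1 ≠ 0) : card0 x = 2 := by
  have hs : {i | x i ≠ 0} = (Set.univ : Set (Fin 2)) := by
    ext i
    fin_cases i <;> simp [h0, h1]
  rw [card0, hs, Set.ncard_univ, Nat.card_eq_fintype_card]
  simp

lemma card0_zero_iff (x : Fin 2 → ℝ) : card0 x = 0 ↔ ∀ i, x i = 0 := by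
  rw [card0, Set.ncard_eq_zero (Set.toFinite _)]
  constructor
  · intro h i
    by_contra hi
    exact absurd h (by simp [Set.eq_empty_iff_forall_notMem]; exact fun h0 h1 => by fin_cases i <;> simp_all)
  · intro h
    ext i; simp [h i]

lemma card0_singleton1 : card0 ![(0:ℝ), 1/5] = 1 := by
  have hs : {i | ![(0:ℝ), 1/5] i ≠ 0} = {1} := by
    ext i
    fin_cases i <;> norm_num
  rw [card0, hs, Set.ncard_singleton]

/-- Counterexample from the proof of Proposition 1.1(i): with
`A = [[0,1],[1,2]]`, `b = (1,0)ᵀ` and `f(x) = ‖Ax - b‖₂²`, the vector `x̂₁ = (0, 1/5)ᵀ`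
(a) minimizes `f` subject to `‖x‖₀ ≤ 1`, (b) minimizes `‖x‖₀` subject to `f(x) ≤ 4/5`,
but (c) for no `λ > 0` minimizes `‖x‖₀ + (1/λ) f(x)` over `ℝ²`. -/
theorem card_reg_converse_fails :
    let A : Matrix (Fin 2) (Fin 2) ℝ := !![0, 1; 1, 2]
    let b : Fin 2 → ℝ := ![1, 0]
    let f : (Fin 2 → ℝ) → ℝ := fun x => ∑ i, (A.mulVec x i - b i) ^ 2
    let xhat : Fin 2 → ℝ := ![0, 1/5]
    (∀ x : Fin 2 → ℝ, card0 x ≤ 1 → f xhat ≤ f x) ∧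
    (∀ x : Fin 2 → ℝ, f x ≤ 4/5 → card0 xhat ≤ card0 x) ∧
    (∀ lam : ℝ, 0 < lam →
      ¬ (∀ x : Fin 2 → ℝ,
          (card0 xhat : ℝ) + (1 / lam) * f xhat ≤ (card0 x : ℝ) + (1 / lam) * f x)) := by
  intro A b f xhat
  have hf : ∀ x : Fin 2 → ℝ, f x = (x 1 - 1) ^ 2 + (x 0 + 2 * x 1) ^ 2 := by
    intro x
    simp [f, A, b, Matrix.mulVec, dotProduct, Fin.sum_univ_two]
  have hfx : f xhat = 4/5 := by
    rw [hf]; norm_num [xhat]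
  refine ⟨?_, ?_, ?_⟩
  · intro x hx
    rw [hfx, hf]
    by_cases h0 : x 0 = 0
    · nlinarith [sq_nonneg (x 1 - 1/5), sq_nonneg (x 0)]
    · by_cases h1 : x 1 = 0
      · nlinarith [sq_nonneg (x 0)]
      · exfalso
        have h2 := card0_two_of x h0 h1
        omega
  · intro x hx
    rw [card0_singleton1]
    by_contra h
    have h0 : card0 x = 0 := by omega
    have := (card0_zero_iff x).mp h0
    rw [hf, this 0, this 1] at hx
    norm_num at hx
  · intro lam hlam H
    by_cases hl : lam < 4/5
    · have := H ![-2, 1]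
      rw [card0_singleton1, card0_two_of ![-2,1] (by norm_num) (by norm_num), hfx,
        hf] at this
      simp only [Matrix.cons_val_zero, Matrix.cons_val_one, Matrix.head_cons] at this
      push_cast at this
      have h2 := mul_le_mul_of_nonneg_left this hlam.le
      field_simp at h2
      nlinarith
    · push_neg at hl
      have := H ![0, 0]
      rw [card0_singleton1, hfx, hf] at this
      have h0 : card0 ![(0:ℝ),0] = 0 := (card0_zero_iff _).mpr (by intro i; fin_cases i <;> rfl)
      rw [h0] at this
      simp only [Matrix.cons_val_zero, Matrix.cons_val_one, Matrix.head_cons] at this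
      push_cast at this
      have h2 := mul_le_mul_of_nonneg_left this hlam.le
      field_simp at h2
      nlinarith
end

section
/- Let n ∈ ℕ, X ⊆ ℝⁿ, f : ℝⁿ → ℝ and k ∈ ℕ. Suppose x* minimizes f over the set C = {x ∈ X : ‖x‖₀ ≤ k}, and suppose that every minimizer x' of f over C satisfies ‖x'‖₀ = ‖x*‖₀ (all optimal solutions have the same cardinality). Then x* also minimizes ‖x‖₀ over {x ∈ X : f(x) ≤ f(x*)}; that is, ‖x*‖₀ ≤ ‖x‖₀ for every x ∈ X with f(x) ≤ f(x*). -/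
/-- Proposition 1.1(ii), positive part: if `xs` optimally solves the
cardinality-constrained problem `min f(x) s.t. ‖x‖₀ ≤ k, x ∈ X`, and all optimal
solutions of this problem share the cardinality `‖xs‖₀`, then `xs` also solves
the cardinality-minimization problem `min ‖x‖₀ s.t. f(x) ≤ f(xs), x ∈ X`. -/
theorem card_constrained_opt_solves_card_min
    (n : ℕ) (X : Set (Fin n → ℝ)) (f : (Fin n → ℝ) → ℝ) (k : ℕ)
    (xs : Fin n → ℝ) (hxsX : xs ∈ X) (hxsk : card0 xs ≤ k)
    (hopt : ∀ x ∈ X, card0 x ≤ k → f xs ≤ f x)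
    (hsamecard : ∀ x' ∈ X, card0 x' ≤ k →
      (∀ x ∈ X, card0 x ≤ k → f x' ≤ f x) → card0 x' = card0 xs) :
    ∀ x ∈ X, f x ≤ f xs → card0 xs ≤ card0 x := by
  intro x hxX hfx
  by_cases hk : card0 x ≤ k
  · have := hsamecard x hxX hk (fun y hy hyk => le_trans hfx (hopt y hy hyk))
    omega
  · omega
end

section
/- Let n ∈ ℕ, X ⊆ ℝⁿ, f : ℝⁿ → ℝ and δ ≥ 0. Suppose x* minimizes ‖x‖₀ over the set D = {x ∈ X : f(x) ≤ δ}, and suppose that every minimizer x' of ‖x‖₀ over D satisfies f(x') = f(x*) (all optimal solutions have the same objective value under f). Then x* also minimizes f over {x ∈ X : ‖x‖₀ ≤ ‖x*‖₀}; that is, f(x*) ≤ f(x) for every x ∈ X with ‖x‖₀ ≤ ‖x*‖₀. -/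
/-- Proposition 1.1(iii), positive part: if `xs` optimally solves the
cardinality-minimization problem `min ‖x‖₀ s.t. f(x) ≤ δ, x ∈ X`, and all optimal
solutions of this problem share the objective value `f(xs)`, then `xs` also solves
the cardinality-constrained problem `min f(x) s.t. ‖x‖₀ ≤ ‖xs‖₀, x ∈ X`. -/
theorem card_min_opt_solves_card_constrained
    (n : ℕ) (X : Set (Fin n → ℝ)) (f : (Fin n → ℝ) → ℝ) (δ : ℝ) (hδ : 0 ≤ δ)
    (xs : Fin n → ℝ) (hxsX : xs ∈ X) (hxsδ : f xs ≤ δ)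
    (hopt : ∀ x ∈ X, f x ≤ δ → card0 xs ≤ card0 x)
    (hsameval : ∀ x' ∈ X, f x' ≤ δ →
      (∀ x ∈ X, f x ≤ δ → card0 x' ≤ card0 x) → f x' = f xs) :
    ∀ x ∈ X, card0 x ≤ card0 xs → f xs ≤ f x := by
  intro x hxX hcard
  by_cases hfx : f x ≤ δ
  · have heq : card0 x = card0 xs := le_antisymm hcard (hopt x hxX hfx)
    have : f x = f xs := hsameval x hxX hfx (fun y hyX hyδ => heq ▸ hopt y hyX hyδ)
    linarith
  · linarith [not_le.mp hfx]
end

section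
/- Let f : ℝ² → ℝ be given by f(x) = (x₁ − 2)². Then both x̂₁ = (1, 0)ᵀ and x̂₂ = (2, 0)ᵀ minimize ‖x‖₀ over {x ∈ ℝ² : f(x) ≤ 1} (each with optimal value ‖x‖₀ = 1), but x̂₁ does NOT minimize f over {x ∈ ℝ² : ‖x‖₀ ≤ 1}, since f(x̂₂) = 0 < 1 = f(x̂₁). Hence the equal-value assumption in Proposition 1.1(iii) cannot be dropped. -/
lemma card0_single (a : ℝ) (ha : a ≠ 0) : card0 ![a, 0] = 1 := by
  unfold card0
  convert Set.ncard_singleton (0 : Fin 2)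
  ext i
  fin_cases i <;> simp [ha]

lemma card0_pos {x : Fin 2 → ℝ} (h : x 0 ≠ 0) : 1 ≤ card0 x := by
  unfold card0
  have : (0:Fin 2) ∈ {i | x i ≠ 0} := h
  calc 1 = ({0} : Set (Fin 2)).ncard := (Set.ncard_singleton _).symm
    _ ≤ _ := Set.ncard_le_ncard (by simpa using this) (Set.toFinite _)

/-- Counterexample from the proof of Proposition 1.1(iii): with `f(x) = (x₁ - 2)²` on `ℝ²`,
both `x̂₁ = (1,0)ᵀ` and `x̂₂ = (2,0)ᵀ` minimize `‖x‖₀` over `{x : f(x) ≤ 1}` (each with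
value `1`), both are feasible, but `x̂₁` does not minimize `f` over `{x : ‖x‖₀ ≤ 1}`,
since `f(x̂₂) = 0 < 1 = f(x̂₁)`. -/
theorem equal_value_assumption_necessary :
    let f : (Fin 2 → ℝ) → ℝ := fun x => (x 0 - 2) ^ 2
    let xhat1 : Fin 2 → ℝ := ![1, 0]
    let xhat2 : Fin 2 → ℝ := ![2, 0]
    f xhat1 ≤ 1 ∧ f xhat2 ≤ 1 ∧
    card0 xhat1 = 1 ∧ card0 xhat2 = 1 ∧
    (∀ x : Fin 2 → ℝ, f x ≤ 1 → card0 xhat1 ≤ card0 x) ∧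
    (∀ x : Fin 2 → ℝ, f x ≤ 1 → card0 xhat2 ≤ card0 x) ∧
    card0 xhat2 ≤ 1 ∧ f xhat2 = 0 ∧ f xhat1 = 1 ∧
    ¬ (∀ x : Fin 2 → ℝ, card0 x ≤ 1 → f xhat1 ≤ f x) := by
  intro f xhat1 xhat2
  have h1 : card0 xhat1 = 1 := card0_single 1 one_ne_zero
  have h2 : card0 xhat2 = 1 := card0_single 2 two_ne_zero
  have key : ∀ x : Fin 2 → ℝ, f x ≤ 1 → 1 ≤ card0 x := by
    intro x hx
    apply card0_pos
    intro h0
    simp only [f, h0] at hx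
    nlinarith
  refine ⟨by norm_num [f, xhat1], by norm_num [f, xhat2], h1, h2,
    fun x hx => h1 ▸ key x hx, fun x hx => h2 ▸ key x hx, h2.le, by norm_num [f, xhat2],
    by norm_num [f, xhat1], ?_⟩
  intro h
  have := h xhat2 h2.le
  norm_num [f, xhat1, xhat2] at this
end

section
/- Let A ∈ ℝ^{m×n} and b ∈ ℝ^m with b ≠ 0, and suppose the system Ax = b has a solution. Call a set S ⊆ [n] a feasible support if there exists x ∈ ℝⁿ with supp(x) ⊆ S and Ax = b, and an infeasible support otherwise; an infeasible support B is maximal if no strict superset of B is infeasible. Then the minimum of ‖x‖₀ over {x ∈ ℝⁿ : Ax = b} equals the minimum of |T| over all sets T ⊆ [n] satisfying T ∩ ([n] \ B) ≠ ∅ for every maximal infeasible support B. That is, the cardinality-minimization problem min{‖x‖₀ : Ax = b} and the covering-type integer program min{|T| : T meets the complement of every maximal infeasible support} have the same optimal value. -/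
/-- `S` is a feasible support w.r.t. the linear system `Ax = b`: some solution of
`Ax = b` has its support contained in `S`. -/
def FeasSupp {m n : ℕ} (A : Matrix (Fin m) (Fin n) ℝ) (b : Fin m → ℝ)
    (S : Finset (Fin n)) : Prop :=
  ∃ x : Fin n → ℝ, (∀ i, x i ≠ 0 → i ∈ S) ∧ A.mulVec x = b

/-- `B` is a maximal infeasible support w.r.t. `Ax = b`. -/
def MaxInfeasSupp {m n : ℕ} (A : Matrix (Fin m) (Fin n) ℝ) (b : Fin m → ℝ)
    (B : Finset (Fin n)) : Prop :=
  ¬ FeasSupp A b B ∧ ∀ B' : Finset (Fin n), B ⊂ B' → FeasSupp A b B'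

/-- The covering-IP reformulation (eq. (3.4)): the optimal value of the cardinality
minimization problem `min ‖x‖₀ s.t. Ax = b` equals the optimal value of the covering
problem `min |T| s.t. T ∩ Bᶜ ≠ ∅ for every maximal infeasible support B`. -/
theorem card_min_eq_covering_min
    (m n : ℕ) (A : Matrix (Fin m) (Fin n) ℝ) (b : Fin m → ℝ)
    (hb : b ≠ 0) (hfeas : ∃ x : Fin n → ℝ, A.mulVec x = b) :
    sInf {k : ℕ | ∃ x : Fin n → ℝ, A.mulVec x = b ∧ card0 x = k} =
      sInf {k : ℕ | ∃ T : Finset (Fin n),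
        (∀ B : Finset (Fin n), MaxInfeasSupp A b B → (T ∩ Bᶜ).Nonempty) ∧ T.card = k} := by
  classical
  -- existence of a maximal infeasible superset of any infeasible support
  have exists_max : ∀ T : Finset (Fin n), ¬ FeasSupp A b T →
      ∃ B : Finset (Fin n), T ⊆ B ∧ MaxInfeasSupp A b B := by
    intro T hT
    set s : Finset (Finset (Fin n)) :=
      Finset.univ.filter (fun B => ¬ FeasSupp A b B ∧ T ⊆ B) with hs
    have hTs : T ∈ s := by simp [hs, hT]
    obtain ⟨B, hBs, hBmax⟩ := s.exists_max_image Finset.card ⟨T, hTs⟩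
    simp only [hs, Finset.mem_filter, Finset.mem_univ, true_and] at hBs
    refine ⟨B, hBs.2, hBs.1, ?_⟩
    intro B' hBB'
    by_contra hB'
    have hB's : B' ∈ s := by
      simp only [hs, Finset.mem_filter, Finset.mem_univ, true_and]
      exact ⟨hB', hBs.2.trans hBB'.subset⟩
    have := hBmax B' hB's
    exact absurd (Finset.card_lt_card hBB') (not_lt.mpr this)
  -- support of a solution gives a covering set
  have sol_to_T : ∀ x : Fin n → ℝ, A.mulVec x = b →
      ∃ T : Finset (Fin n),
        (∀ B : Finset (Fin n), MaxInfeasSupp A b B → (T ∩ Bᶜ).Nonempty) ∧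
        T.card = card0 x := by
    intro x hx
    refine ⟨Finset.univ.filter (fun i => x i ≠ 0), ?_, ?_⟩
    · intro B hB
      by_contra hempty
      apply hB.1
      refine ⟨x, ?_, hx⟩
      intro i hi
      by_contra hiB
      exact hempty ⟨i, Finset.mem_inter.mpr ⟨by simp [hi], Finset.mem_compl.mpr hiB⟩⟩
    · have : {i | x i ≠ 0} = ↑(Finset.univ.filter (fun i => x i ≠ 0)) := by
        ext i; simp
      rw [card0, this, Set.ncard_coe_finset]
  -- a covering set is a feasible support
  have T_to_sol : ∀ T : Finset (Fin n),
      (∀ B : Finset (Fin n), MaxInfeasSupp A b B → (T ∩ Bᶜ).Nonempty) →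
      ∃ x : Fin n → ℝ, A.mulVec x = b ∧ card0 x ≤ T.card := by
    intro T hT
    have hfT : FeasSupp A b T := by
      by_contra hinf
      obtain ⟨B, hTB, hB⟩ := exists_max T hinf
      obtain ⟨i, hi⟩ := hT B hB
      rw [Finset.mem_inter, Finset.mem_compl] at hi
      exact hi.2 (hTB hi.1)
    obtain ⟨x, hsupp, hx⟩ := hfT
    refine ⟨x, hx, ?_⟩
    have hsub : {i | x i ≠ 0} ⊆ ↑T := fun i hi => hsupp i hi
    calc card0 x ≤ (↑T : Set (Fin n)).ncard :=
          Set.ncard_le_ncard hsub T.finite_toSet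
      _ = T.card := Set.ncard_coe_finset T
  -- nonemptiness of both sets
  obtain ⟨x₀, hx₀⟩ := hfeas
  have hLne : {k : ℕ | ∃ x : Fin n → ℝ, A.mulVec x = b ∧ card0 x = k}.Nonempty :=
    ⟨card0 x₀, x₀, hx₀, rfl⟩
  obtain ⟨T₀, hT₀, hT₀card⟩ := sol_to_T x₀ hx₀
  have hRne : {k : ℕ | ∃ T : Finset (Fin n),
      (∀ B : Finset (Fin n), MaxInfeasSupp A b B → (T ∩ Bᶜ).Nonempty) ∧ T.card = k}.Nonempty :=
    ⟨T₀.card, T₀, hT₀, rfl⟩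
  apply le_antisymm
  · obtain ⟨T, hT, hTcard⟩ := Nat.sInf_mem hRne
    obtain ⟨x, hx, hxle⟩ := T_to_sol T hT
    calc sInf {k : ℕ | ∃ x : Fin n → ℝ, A.mulVec x = b ∧ card0 x = k}
        ≤ card0 x := Nat.sInf_le ⟨x, hx, rfl⟩
      _ ≤ T.card := hxle
      _ = _ := hTcard
  · obtain ⟨x, hx, hxcard⟩ := Nat.sInf_mem hLne
    obtain ⟨T, hT, hTcard⟩ := sol_to_T x hx
    calc sInf {k : ℕ | ∃ T : Finset (Fin n),
          (∀ B : Finset (Fin n), MaxInfeasSupp A b B → (T ∩ Bᶜ).Nonempty) ∧ T.card = k}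
        ≤ T.card := Nat.sInf_le ⟨T, hT, rfl⟩
      _ = card0 x := hTcard
      _ = _ := hxcard
end

section
/- Let A ∈ ℝ^{m×n} with rank(A) = m < n, and let D ∈ ℝ^{(n−m)×n} be a matrix whose nullspace {x ∈ ℝⁿ : Dx = 0} equals the column space of Aᵀ (i.e., the columns of Aᵀ form a basis of the nullspace of D). Then: (a) the optimal values of the two problems min{‖Aᵀv‖₀ : v ∈ ℝ^m, v ≠ 0} and min{‖x‖₀ : Dx = 0, x ≠ 0} coincide; and (b) if x̄ is an optimal solution of min{‖x‖₀ : Dx = 0, x ≠ 0}, then v̄ = (AAᵀ)⁻¹A x̄ is well defined (AAᵀ is invertible since rank(A) = m), satisfies Aᵀv̄ = x̄, and is an optimal solution of min{‖Aᵀv‖₀ : v ≠ 0}. -/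
open Matrix

/-- Proposition 3.2: for `A ∈ ℝ^{m×n}` with `rank(A) = m < n` and `D ∈ ℝ^{(n-m)×n}` whose
nullspace is the column space of `Aᵀ`, the cospark problem `min{‖Aᵀv‖₀ : v ≠ 0}` and the
spark problem `min{‖x‖₀ : Dx = 0, x ≠ 0}` have the same optimal value; moreover, from any
optimal solution `x̄` of the spark problem, `v̄ = (AAᵀ)⁻¹ A x̄` is well defined
(`AAᵀ` is invertible), satisfies `Aᵀ v̄ = x̄`, and optimally solves the cospark problem. -/
theorem cospark_as_spark
    (m n : ℕ) (A : Matrix (Fin m) (Fin n) ℝ) (D : Matrix (Fin (n - m)) (Fin n) ℝ)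
    (hrank : A.rank = m) (hmn : m < n)
    (hD : {x : Fin n → ℝ | D.mulVec x = 0} = {x : Fin n → ℝ | ∃ v : Fin m → ℝ, Aᵀ.mulVec v = x}) :
    (sInf {k : ℕ | ∃ v : Fin m → ℝ, v ≠ 0 ∧ card0 (Aᵀ.mulVec v) = k} =
      sInf {k : ℕ | ∃ x : Fin n → ℝ, x ≠ 0 ∧ D.mulVec x = 0 ∧ card0 x = k}) ∧
    (∀ xbar : Fin n → ℝ, xbar ≠ 0 → D.mulVec xbar = 0 →
      (∀ x : Fin n → ℝ, x ≠ 0 → D.mulVec x = 0 → card0 xbar ≤ card0 x) →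
      IsUnit (A * Aᵀ).det ∧
      Aᵀ.mulVec ((A * Aᵀ)⁻¹.mulVec (A.mulVec xbar)) = xbar ∧
      (A * Aᵀ)⁻¹.mulVec (A.mulVec xbar) ≠ 0 ∧
      (∀ v : Fin m → ℝ, v ≠ 0 →
        card0 (Aᵀ.mulVec ((A * Aᵀ)⁻¹.mulVec (A.mulVec xbar))) ≤ card0 (Aᵀ.mulVec v))) := by
    -- AAᵀ is invertible since rank A = m
  have hBrank : (A * Aᵀ).rank = m := by rw [Matrix.rank_self_mul_transpose, hrank]
  have hBsurj : Function.Surjective (A * Aᵀ).mulVec := by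
    have htop : LinearMap.range (A * Aᵀ).mulVecLin = ⊤ := by
      apply Submodule.eq_top_of_finrank_eq
      rw [← Matrix.rank, hBrank, Module.finrank_pi]
      simp
    intro y
    have : y ∈ LinearMap.range (A * Aᵀ).mulVecLin := htop ▸ Submodule.mem_top
    obtain ⟨v, hv⟩ := this
    exact ⟨v, hv⟩
  have hBunit : IsUnit (A * Aᵀ) := Matrix.mulVec_surjective_iff_isUnit.mp hBsurj
  have hBdet : IsUnit (A * Aᵀ).det := (Matrix.isUnit_iff_isUnit_det _).mp hBunit
  -- key recovery fact
  have recover : ∀ (v : Fin m → ℝ), (A * Aᵀ)⁻¹.mulVec (A.mulVec (Aᵀ.mulVec v)) = v := by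
    intro v
    rw [Matrix.mulVec_mulVec, Matrix.mulVec_mulVec, Matrix.mul_assoc,
      Matrix.nonsing_inv_mul _ hBdet, Matrix.one_mulVec]
  have hinj : ∀ (v : Fin m → ℝ), Aᵀ.mulVec v = 0 → v = 0 := by
    intro v hv
    have := recover v
    rw [hv] at this
    simpa using this.symm
  have hmem : ∀ x : Fin n → ℝ, D.mulVec x = 0 ↔ ∃ v : Fin m → ℝ, Aᵀ.mulVec v = x := by
    intro x
    constructor
    · intro hx
      have : x ∈ {x : Fin n → ℝ | D.mulVec x = 0} := hx
      rw [hD] at this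
      exact this
    · intro hx
      have : x ∈ {x : Fin n → ℝ | ∃ v : Fin m → ℝ, Aᵀ.mulVec v = x} := hx
      rw [← hD] at this
      exact this
  constructor
  · congr 1
    ext k
    constructor
    · rintro ⟨v, hv, rfl⟩
      refine ⟨Aᵀ.mulVec v, ?_, ?_, rfl⟩
      · intro h0
        exact hv (hinj v h0)
      · exact (hmem _).mpr ⟨v, rfl⟩
    · rintro ⟨x, hx0, hxD, rfl⟩
      obtain ⟨v, hv⟩ := (hmem x).mp hxD
      refine ⟨v, ?_, by rw [hv]⟩
      rintro rfl
      simp [Matrix.mulVec_zero] at hv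
      exact hx0 hv.symm
  · intro xbar hx0 hxD hopt
    obtain ⟨v, hv⟩ := (hmem xbar).mp hxD
    have hvb : (A * Aᵀ)⁻¹.mulVec (A.mulVec xbar) = v := by rw [← hv, recover]
    have hfix : Aᵀ.mulVec ((A * Aᵀ)⁻¹.mulVec (A.mulVec xbar)) = xbar := by rw [hvb, hv]
    refine ⟨hBdet, hfix, ?_, ?_⟩
    · intro h0
      rw [h0, Matrix.mulVec_zero] at hfix
      exact hx0 hfix.symm
    · intro w hw
      have hfeas : D.mulVec (Aᵀ.mulVec w) = 0 := (hmem _).mpr ⟨w, rfl⟩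
      have hne : Aᵀ.mulVec w ≠ 0 := fun h0 => hw (hinj w h0)
      calc card0 (Aᵀ.mulVec ((A * Aᵀ)⁻¹.mulVec (A.mulVec xbar))) = card0 xbar := by rw [hfix]
        _ ≤ card0 (Aᵀ.mulVec w) := hopt _ hne hfeas
end

section
/- Let A ∈ ℝ^{m×n}, let x̂ ∈ ℝⁿ, and set b = Ax̂ and S = supp(x̂). Then x̂ is the unique optimal solution of the basis pursuit problem min{‖x‖₁ : Ax = b} if and only if the columns {A_j : j ∈ S} are linearly independent (equivalently, rank(A_S) = ‖x̂‖₀) and there exists w ∈ ℝ^m such that (Aᵀw)_j = sign(x̂_j) for all j ∈ S and |(Aᵀw)_j| < 1 for all j ∉ S. -/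
open Matrix

open Finset

lemma sign_mul_self' (x : ℝ) : Real.sign x * x = |x| := by
  rcases lt_trichotomy x 0 with h|h|h
  · rw [Real.sign_of_neg h, abs_of_neg h]; ring
  · simp [h]
  · rw [Real.sign_of_pos h, abs_of_pos h]; ring

lemma abs_sign_le_one' (x : ℝ) : |Real.sign x| ≤ 1 := by
  rcases lt_trichotomy x 0 with h|h|h
  · rw [Real.sign_of_neg h]; norm_num
  · simp [h]
  · rw [Real.sign_of_pos h]; norm_num

lemma sum_mulVec_swap {m n : ℕ} (A : Matrix (Fin m) (Fin n) ℝ) (w : Fin m → ℝ)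
    (h : Fin n → ℝ) : ∑ j, (Aᵀ.mulVec w) j * h j = ∑ i, w i * (A.mulVec h) i := by
  simp only [Matrix.mulVec, dotProduct, transpose_apply, Finset.sum_mul, Finset.mul_sum]
  rw [Finset.sum_comm]
  congr 1; ext i; congr 1; ext j; ring

noncomputable def phi {n : ℕ} (xhat h : Fin n → ℝ) : ℝ :=
  ∑ j, if xhat j = 0 then |h j| else Real.sign (xhat j) * h j

lemma percoord (a b : ℝ) :
    |a| + (if a = 0 then |b| else Real.sign a * b) ≤ |a + b| := by
  by_cases ha : a = 0
  · simp [ha]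
  · simp only [ha, if_false]
    have h1 : Real.sign a * a + Real.sign a * b = Real.sign a * (a + b) := by ring
    calc |a| + Real.sign a * b = Real.sign a * (a + b) := by rw [← sign_mul_self' a, h1]
    _ ≤ |Real.sign a * (a + b)| := le_abs_self _
    _ = |Real.sign a| * |a + b| := abs_mul _ _
    _ ≤ 1 * |a + b| := by
        exact mul_le_mul_of_nonneg_right (abs_sign_le_one' a) (abs_nonneg _)
    _ = |a + b| := one_mul _

lemma kerpos_uniq {m n : ℕ} (A : Matrix (Fin m) (Fin n) ℝ) (xhat : Fin n → ℝ)
    (hk : ∀ h : Fin n → ℝ, A.mulVec h = 0 → h ≠ 0 → 0 < phi xhat h) :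
    ∀ x : Fin n → ℝ, A.mulVec x = A.mulVec xhat → x ≠ xhat →
      (∑ i, |xhat i|) < ∑ i, |x i| := by
  intro x hAx hne
  set h := x - xhat with hh
  have hker : A.mulVec h = 0 := by
    rw [hh, Matrix.mulVec_sub, hAx, sub_self]
  have hne0 : h ≠ 0 := sub_ne_zero.mpr hne
  have hpos := hk h hker hne0
  have key : (∑ i, |xhat i|) + phi xhat h ≤ ∑ i, |x i| := by
    rw [phi, ← Finset.sum_add_distrib]
    apply Finset.sum_le_sum
    intro j _
    have : x j = xhat j + h j := by simp [hh]
    rw [this]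
    exact percoord _ _
  linarith

lemma uniq_kerpos {m n : ℕ} (A : Matrix (Fin m) (Fin n) ℝ) (xhat : Fin n → ℝ)
    (hu : ∀ x : Fin n → ℝ, A.mulVec x = A.mulVec xhat → x ≠ xhat →
      (∑ i, |xhat i|) < ∑ i, |x i|) :
    ∀ h : Fin n → ℝ, A.mulVec h = 0 → h ≠ 0 → 0 < phi xhat h := by
  classical
  intro h hker hne
  set T : Finset (Fin n) := univ.filter (fun j => xhat j ≠ 0 ∧ h j ≠ 0) with hT
  set t : ℝ := if hTn : T.Nonempty then T.inf' hTn (fun j => |xhat j| / |h j|) else 1 with ht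
  have htpos : 0 < t := by
    rw [ht]
    split_ifs with hTn
    · apply (Finset.lt_inf'_iff hTn).2
      intro j hj
      rw [hT, Finset.mem_filter] at hj
      exact div_pos (abs_pos.2 hj.2.1) (abs_pos.2 hj.2.2)
    · norm_num
  have hP : ∀ j, xhat j ≠ 0 → t * |h j| ≤ |xhat j| := by
    intro j hj
    by_cases hhj : h j = 0
    · simp [hhj, abs_nonneg]
    · have hjT : j ∈ T := by rw [hT, Finset.mem_filter]; exact ⟨Finset.mem_univ j, hj, hhj⟩
      have hTn : T.Nonempty := ⟨j, hjT⟩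
      have h1 : t ≤ |xhat j| / |h j| := by
        rw [ht]; simp only [hTn, dif_pos]
        exact Finset.inf'_le _ hjT
      rw [← le_div_iff₀ (abs_pos.2 hhj)]
      exact h1
  set x : Fin n → ℝ := xhat + t • h with hx
  have hAx : A.mulVec x = A.mulVec xhat := by
    rw [hx, Matrix.mulVec_add, Matrix.mulVec_smul, hker, smul_zero, add_zero]
  have hxne : x ≠ xhat := by
    intro hcon
    apply hne
    have : t • h = 0 := by
      have := congrArg (fun y => y - xhat) hcon
      simpa [hx] using this
    rcases smul_eq_zero.1 this with h1 | h1
    · exact absurd h1 (ne_of_gt htpos)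
    · exact h1
  have hlt := hu x hAx hxne
  have hsum : (∑ i, |x i|) = (∑ i, |xhat i|) + t * phi xhat h := by
    rw [phi, Finset.mul_sum, ← Finset.sum_add_distrib]
    apply Finset.sum_congr rfl
    intro j _
    have hxj : x j = xhat j + t * h j := by simp [hx]
    rw [hxj]
    by_cases hj : xhat j = 0
    · simp [hj, abs_mul, abs_of_pos htpos]
    · simp only [hj, if_false]
      have hb := hP j hj
      rcases lt_trichotomy (xhat j) 0 with hs | hs | hs
      · have h0 : xhat j + t * h j ≤ 0 := by
          have : t * h j ≤ t * |h j| :=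
            mul_le_mul_of_nonneg_left (le_abs_self _) (le_of_lt htpos)
          have habs : |xhat j| = -xhat j := abs_of_neg hs
          nlinarith
        rw [abs_of_nonpos h0, Real.sign_of_neg hs, abs_of_neg hs]; ring
      · exact absurd hs hj
      · have h0 : 0 ≤ xhat j + t * h j := by
          have : -(t * |h j|) ≤ t * h j := by
            have : t * (-h j) ≤ t * |h j| :=
              mul_le_mul_of_nonneg_left (neg_le_abs _) (le_of_lt htpos)
            linarith
          have habs : |xhat j| = xhat j := abs_of_pos hs
          nlinarith
        rw [abs_of_nonneg h0, Real.sign_of_pos hs, abs_of_pos hs]; ring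
  rw [hsum] at hlt
  nlinarith

lemma bridge {m n : ℕ} (A : Matrix (Fin m) (Fin n) ℝ) (xhat : Fin n → ℝ)
    (h : Fin n → ℝ) (hsupp : ∀ j, xhat j = 0 → h j = 0) (i : Fin m) :
    ∑ j : {j : Fin n // xhat j ≠ 0}, h j.1 * A i j.1 = A.mulVec h i := by
  classical
  rw [← Finset.sum_subtype (univ.filter (fun j => xhat j ≠ 0))
    (by intro x; simp) (fun j => h j * A i j)]
  rw [Matrix.mulVec, dotProduct]
  rw [Finset.sum_filter]
  apply Finset.sum_congr rfl
  intro j _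
  by_cases hj : xhat j = 0
  · simp [hj, hsupp j hj]
  · simp [hj, mul_comm]

lemma phi_neg {n : ℕ} (xhat h : Fin n → ℝ) (hsupp : ∀ j, xhat j = 0 → h j = 0) :
    phi xhat (-h) = - phi xhat h := by
  rw [phi, phi, ← Finset.sum_neg_distrib]
  apply Finset.sum_congr rfl
  intro j _
  by_cases hj : xhat j = 0
  · simp [hj, hsupp j hj]
  · simp only [hj, if_false, Pi.neg_apply]; ring

lemma linindep_supp {m n : ℕ} (A : Matrix (Fin m) (Fin n) ℝ) (xhat : Fin n → ℝ)
    (hli : LinearIndependent ℝ (fun j : {j : Fin n // xhat j ≠ 0} => fun i => A i j.1)) :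
    ∀ h : Fin n → ℝ, A.mulVec h = 0 → (∀ j, xhat j = 0 → h j = 0) → h = 0 := by
  classical
  intro h hker hsupp
  rw [Fintype.linearIndependent_iff] at hli
  have hsum : ∑ j : {j : Fin n // xhat j ≠ 0}, h j.1 • (fun i => A i j.1) = 0 := by
    funext i
    rw [Finset.sum_apply]
    simp only [Pi.smul_apply, smul_eq_mul]
    rw [bridge A xhat h hsupp i, hker]
  have hz := hli (fun j => h j.1) hsum
  funext j
  by_cases hj : xhat j = 0
  · exact hsupp j hj
  · exact hz ⟨j, hj⟩

lemma kerpos_linindep {m n : ℕ} (A : Matrix (Fin m) (Fin n) ℝ) (xhat : Fin n → ℝ)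
    (hk : ∀ h : Fin n → ℝ, A.mulVec h = 0 → h ≠ 0 → 0 < phi xhat h) :
    LinearIndependent ℝ (fun j : {j : Fin n // xhat j ≠ 0} => fun i => A i j.1) := by
  classical
  rw [Fintype.linearIndependent_iff]
  intro g hg j0
  by_contra hj0
  set h : Fin n → ℝ := fun j => if hj : xhat j ≠ 0 then g ⟨j, hj⟩ else 0 with hhdef
  have hsupp : ∀ j, xhat j = 0 → h j = 0 := by
    intro j hj; simp [hhdef, hj]
  have hker : A.mulVec h = 0 := by
    funext i
    rw [← bridge A xhat h hsupp i]
    have : ∀ j : {j : Fin n // xhat j ≠ 0}, h j.1 = g j := by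
      intro j; simp [hhdef, j.2]
    have h2 : ∑ j : {j : Fin n // xhat j ≠ 0}, h j.1 * A i j.1
        = ∑ j : {j : Fin n // xhat j ≠ 0}, g j * A i j.1 := by
      apply Finset.sum_congr rfl; intro j _; rw [this j]
    rw [h2]
    have := congrFun hg i
    rw [Finset.sum_apply] at this
    simpa using this
  have hne : h ≠ 0 := by
    intro hcon
    apply hj0
    have : h j0.1 = 0 := by rw [hcon]; rfl
    simpa [hhdef, j0.2] using this
  have h1 := hk h hker hne
  have h2 := hk (-h) (by rw [Matrix.mulVec_neg, hker, neg_zero]) (neg_ne_zero.2 hne)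
  rw [phi_neg xhat h hsupp] at h2
  linarith

lemma supp_ker_of_kerpos {m n : ℕ} (A : Matrix (Fin m) (Fin n) ℝ) (xhat : Fin n → ℝ)
    (hk : ∀ h : Fin n → ℝ, A.mulVec h = 0 → h ≠ 0 → 0 < phi xhat h) :
    ∀ h : Fin n → ℝ, A.mulVec h = 0 → (∀ j, xhat j = 0 → h j = 0) → h = 0 := by
  intro h hker hsupp
  by_contra hne
  have h1 := hk h hker hne
  have h2 := hk (-h) (by rw [Matrix.mulVec_neg, hker, neg_zero]) (neg_ne_zero.2 hne)
  rw [phi_neg xhat h hsupp] at h2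
  linarith

lemma cert_kerpos {m n : ℕ} (A : Matrix (Fin m) (Fin n) ℝ) (xhat : Fin n → ℝ)
    (hli : LinearIndependent ℝ (fun j : {j : Fin n // xhat j ≠ 0} => fun i => A i j.1))
    (w : Fin m → ℝ)
    (hw1 : ∀ j : Fin n, xhat j ≠ 0 → Aᵀ.mulVec w j = Real.sign (xhat j))
    (hw2 : ∀ j : Fin n, xhat j = 0 → |Aᵀ.mulVec w j| < 1) :
    ∀ h : Fin n → ℝ, A.mulVec h = 0 → h ≠ 0 → 0 < phi xhat h := by
  classical
  intro h hker hne
  set y : Fin n → ℝ := Aᵀ.mulVec w with hy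
  have hdot : ∑ j, y j * h j = 0 := by
    rw [hy, sum_mulVec_swap, hker]
    simp
  have hrepr : phi xhat h = ∑ j, (if xhat j = 0 then |h j| - y j * h j else 0) := by
    have : phi xhat h = (∑ j, (if xhat j = 0 then |h j| - y j * h j else 0))
        + ∑ j, y j * h j := by
      rw [phi, ← Finset.sum_add_distrib]
      apply Finset.sum_congr rfl
      intro j _
      by_cases hj : xhat j = 0
      · simp [hj]
      · simp only [hj, if_false]
        rw [← hw1 j hj]
        ring
    rw [this, hdot, add_zero]
  have hterm : ∀ j, 0 ≤ (if xhat j = 0 then |h j| - y j * h j else 0) := by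
    intro j
    by_cases hj : xhat j = 0
    · simp only [hj, if_true]
      have h1 : y j * h j ≤ |y j| * |h j| := by
        calc y j * h j ≤ |y j * h j| := le_abs_self _
        _ = |y j| * |h j| := abs_mul _ _
      have h2 : |y j| * |h j| ≤ 1 * |h j| :=
        mul_le_mul_of_nonneg_right (le_of_lt (hw2 j hj)) (abs_nonneg _)
      linarith
    · simp [hj]
  have hex : ∃ j1, xhat j1 = 0 ∧ h j1 ≠ 0 := by
    by_contra hcon
    push_neg at hcon
    exact hne (linindep_supp A xhat hli h hker (fun j hj => by
      by_contra hc; exact hc (hcon j hj)))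
  obtain ⟨j1, hj1, hhj1⟩ := hex
  rw [hrepr]
  apply Finset.sum_pos'
  · intro j _; exact hterm j
  · refine ⟨j1, Finset.mem_univ j1, ?_⟩
    simp only [hj1, if_true]
    have h1 : y j1 * h j1 ≤ |y j1| * |h j1| := by
      calc y j1 * h j1 ≤ |y j1 * h j1| := le_abs_self _
      _ = |y j1| * |h j1| := abs_mul _ _
    have h2 : |y j1| * |h j1| < 1 * |h j1| :=
      mul_lt_mul_of_pos_right (hw2 j1 hj1) (abs_pos.2 hhj1)
    linarith

lemma dual_range {m n : ℕ} (A : Matrix (Fin m) (Fin n) ℝ) (y : Fin n → ℝ)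
    (hy : ∀ h : Fin n → ℝ, A.mulVec h = 0 → ∑ j, y j * h j = 0) :
    ∃ w : Fin m → ℝ, Aᵀ.mulVec w = y := by
  classical
  by_contra hcon
  push_neg at hcon
  set R : Submodule ℝ (Fin n → ℝ) := LinearMap.range (Matrix.mulVecLin Aᵀ) with hR
  have hyR : y ∉ R := by
    intro hmem
    obtain ⟨w, hw⟩ := hmem
    exact hcon w (by rw [Matrix.mulVec_transpose]; simpa [Matrix.mulVecLin_apply] using hw)
  have h0 : (Submodule.Quotient.mk y : (Fin n → ℝ) ⧸ R) ≠ 0 := by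
    intro heq
    exact hyR ((Submodule.Quotient.mk_eq_zero R).1 heq)
  have hex : ∃ φ : Module.Dual ℝ ((Fin n → ℝ) ⧸ R),
      φ (Submodule.Quotient.mk y) ≠ 0 := by
    by_contra hc
    push_neg at hc
    exact h0 ((Module.forall_dual_apply_eq_zero_iff ℝ _).1 hc)
  obtain ⟨φ, hφ⟩ := hex
  set ψ : Module.Dual ℝ (Fin n → ℝ) := φ.comp R.mkQ with hψdef
  have hψR : ∀ w : Fin m → ℝ, ψ (Aᵀ.mulVec w) = 0 := by
    intro w
    have hmem : Aᵀ.mulVec w ∈ R :=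
      ⟨w, by rw [Matrix.mulVecLin_apply, Matrix.mulVec_transpose]⟩
    simp [hψdef, LinearMap.comp_apply, (Submodule.Quotient.mk_eq_zero R).2 hmem]
  set z : Fin n → ℝ := fun j => ψ (fun k => if j = k then 1 else 0) with hz
  have hrepr : ∀ x : Fin n → ℝ, ψ x = ∑ j, x j * z j := by
    intro x
    conv_lhs => rw [pi_eq_sum_univ x]
    rw [map_sum]
    apply Finset.sum_congr rfl
    intro j _
    rw [LinearMap.map_smul, smul_eq_mul, hz]
  have hAz : A.mulVec z = 0 := by
    funext i
    have hcol : Aᵀ.mulVec (fun k => if i = k then 1 else 0) = fun j => A i j := by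
      funext j
      simp [Matrix.mulVec, dotProduct, transpose_apply, eq_comm]
    have := hψR (fun k => if i = k then 1 else 0)
    rw [hcol, hrepr] at this
    simpa [Matrix.mulVec, dotProduct] using this
  have h1 : ψ y = 0 := by rw [hrepr]; exact hy z hAz
  exact hφ (by simpa [hψdef] using h1)

lemma rho_exists {m n : ℕ} (A : Matrix (Fin m) (Fin n) ℝ) (xhat : Fin n → ℝ)
    (hk : ∀ h : Fin n → ℝ, A.mulVec h = 0 → h ≠ 0 → 0 < phi xhat h) :
    ∃ ρ : ℝ, 0 ≤ ρ ∧ ρ < 1 ∧ ∀ h : Fin n → ℝ, A.mulVec h = 0 →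
      (-∑ j, (if xhat j = 0 then 0 else Real.sign (xhat j)) * h j) ≤
        ρ * ∑ j, (if xhat j = 0 then |h j| else 0) := by
  classical
  set c : Fin n → ℝ := fun j => if xhat j = 0 then 0 else Real.sign (xhat j) with hc
  set q : (Fin n → ℝ) → ℝ := fun h => ∑ j, (if xhat j = 0 then |h j| else 0) with hq
  set L : (Fin n → ℝ) → ℝ := fun h => -∑ j, c j * h j with hL
  have hphi : ∀ h, phi xhat h = q h - L h := by
    intro h
    rw [phi, hq, hL, hc]
    rw [sub_neg_eq_add, ← Finset.sum_add_distrib]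
    apply Finset.sum_congr rfl
    intro j _
    by_cases hj : xhat j = 0 <;> simp [hj]
  have hq0 : ∀ h, 0 ≤ q h := by
    intro h; rw [hq]
    apply Finset.sum_nonneg; intro j _
    by_cases hj : xhat j = 0 <;> simp [hj, abs_nonneg]
  have hqsmul : ∀ (t : ℝ) (h : Fin n → ℝ), q (t • h) = |t| * q h := by
    intro t h
    rw [hq, Finset.mul_sum]
    apply Finset.sum_congr rfl
    intro j _
    by_cases hj : xhat j = 0 <;> simp [hj, abs_mul]
  have hLsmul : ∀ (t : ℝ) (h : Fin n → ℝ), L (t • h) = t * L h := by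
    intro t h
    rw [hL]
    simp only [Pi.smul_apply, smul_eq_mul, mul_neg, Finset.mul_sum]
    congr 1
    apply Finset.sum_congr rfl
    intro j _; ring
  set N : Submodule ℝ (Fin n → ℝ) := LinearMap.ker (Matrix.mulVecLin A) with hN
  have hmemN : ∀ h : Fin n → ℝ, h ∈ N ↔ A.mulVec h = 0 := by
    intro h; rw [hN, LinearMap.mem_ker, Matrix.mulVecLin_apply]
  have hcontL : Continuous (fun h : ↥N => L h.1) := by
    apply Continuous.neg
    apply continuous_finset_sum
    intro j _
    exact continuous_const.mul ((continuous_apply j).comp continuous_subtype_val)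
  have hcontq : Continuous (fun h : ↥N => q h.1) := by
    apply continuous_finset_sum
    intro j _
    by_cases hj : xhat j = 0
    · simp only [hj, if_true]
      exact ((continuous_apply j).comp continuous_subtype_val).abs
    · simp only [hj, if_false]
      exact continuous_const
  by_cases hsph : (Metric.sphere (0 : ↥N) 1).Nonempty
  · obtain ⟨h₀, hh₀, hmax⟩ := (isCompact_sphere (0 : ↥N) 1).exists_isMaxOn hsph
      ((hcontL.sub hcontq).continuousOn)
    have hh₀norm : ‖h₀‖ = 1 := by simpa using hh₀
    have hh₀ne : (h₀ : Fin n → ℝ) ≠ 0 := by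
      intro hcon
      have : h₀ = 0 := Subtype.ext hcon
      rw [this] at hh₀norm; simp at hh₀norm
    set δ : ℝ := q h₀.1 - L h₀.1 with hδ
    have hδpos : 0 < δ := by
      have := hk h₀.1 ((hmemN h₀.1).1 h₀.2) hh₀ne
      rw [hphi] at this; linarith
    clear_value δ
    have hscale : ∀ h : Fin n → ℝ, h ∈ N → L h ≤ q h - δ * ‖h‖ := by
      intro h hmem
      by_cases hne : h = 0
      · have : L (0 : Fin n → ℝ) = 0 := by simp [hL]
        have hq00 : q (0 : Fin n → ℝ) = 0 := by
          rw [hq]; apply Finset.sum_eq_zero; intro j _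
          by_cases hj : xhat j = 0 <;> simp [hj]
        rw [hne, this, hq00]; simp
      · set h' : ↥N := ⟨h, hmem⟩ with hh'
        have hnorm_ne : ‖h‖ ≠ 0 := by
          simpa using norm_ne_zero_iff.2 hne
        have hnormpos : 0 < ‖h‖ := norm_pos_iff.2 hne
        set u : ↥N := ‖h‖⁻¹ • h' with hu
        have hucoe : (u : Fin n → ℝ) = ‖h‖⁻¹ • h := rfl
        have hunorm : ‖u‖ = 1 := by
          have h5 : ‖u‖ = ‖(u : Fin n → ℝ)‖ := rfl
          rw [h5, hucoe, norm_smul, norm_inv, norm_norm, inv_mul_cancel₀ hnorm_ne]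
        have humem : u ∈ Metric.sphere (0 : ↥N) 1 := by
          simpa using hunorm
        have hFu : L (u : Fin n → ℝ) - q (u : Fin n → ℝ) ≤ L h₀.1 - q h₀.1 := hmax humem
        have hu1 : (u : Fin n → ℝ) = ‖h‖⁻¹ • h := rfl
        rw [hu1, hLsmul, hqsmul] at hFu
        have habs : |‖h‖⁻¹| = ‖h‖⁻¹ := abs_of_pos (by positivity)
        rw [habs] at hFu
        have hFh0 : L h₀.1 - q h₀.1 = -δ := by rw [hδ]; ring
        rw [hFh0] at hFu
        have := mul_le_mul_of_nonneg_left hFu (le_of_lt hnormpos)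
        calc L h = ‖h‖ * (‖h‖⁻¹ * L h) := by field_simp
        _ ≤ ‖h‖ * (‖h‖⁻¹ * q h - δ) + 0 := by
            rw [add_zero]
            apply mul_le_mul_of_nonneg_left _ (le_of_lt hnormpos)
            linarith
        _ = q h - δ * ‖h‖ := by field_simp; ring
    set C : ℝ := (n : ℝ) + 1 with hC
    have hCpos : 0 < C := by positivity
    have hqC : ∀ h : Fin n → ℝ, q h ≤ C * ‖h‖ := by
      intro h
      have h1 : q h ≤ ∑ j : Fin n, ‖h‖ := by
        rw [hq]
        apply Finset.sum_le_sum
        intro j _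
        have hj2 : |h j| ≤ ‖h‖ := by
          have := norm_le_pi_norm h j
          simpa [Real.norm_eq_abs] using this
        by_cases hj : xhat j = 0 <;> simp [hj, hj2, norm_nonneg]
      rw [Finset.sum_const, Finset.card_univ, Fintype.card_fin, nsmul_eq_mul] at h1
      have : (n : ℝ) * ‖h‖ ≤ C * ‖h‖ := by
        apply mul_le_mul_of_nonneg_right _ (norm_nonneg h)
        rw [hC]; linarith
      linarith
    refine ⟨max 0 (1 - δ / C), le_max_left _ _, ?_, ?_⟩
    · apply max_lt one_pos
      have : 0 < δ / C := div_pos hδpos hCpos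
      linarith
    · intro h hker
      have hmem : h ∈ N := (hmemN h).2 hker
      have h1 := hscale h hmem
      have h2 : q h / C ≤ ‖h‖ := by
        rw [div_le_iff₀ hCpos, mul_comm]
        exact hqC h
      have h3 : L h ≤ (1 - δ / C) * q h := by
        have h4 : δ * (q h / C) ≤ δ * ‖h‖ :=
          mul_le_mul_of_nonneg_left h2 (le_of_lt hδpos)
        have : L h ≤ q h - δ * (q h / C) := le_trans h1 (sub_le_sub_left h4 (q h))
        calc L h ≤ q h - δ * (q h / C) := this
        _ = (1 - δ / C) * q h := by field_simp
      have h5 : (1 - δ / C) * q h ≤ max 0 (1 - δ / C) * q h :=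
        mul_le_mul_of_nonneg_right (le_max_right _ _) (hq0 h)
      calc (-∑ j, (if xhat j = 0 then 0 else Real.sign (xhat j)) * h j) = L h := rfl
      _ ≤ max 0 (1 - δ / C) * q h := le_trans h3 h5
      _ = max 0 (1 - δ / C) * ∑ j, (if xhat j = 0 then |h j| else 0) := rfl
  · refine ⟨0, le_refl _, one_pos, ?_⟩
    intro h hker
    have hmem : h ∈ N := (hmemN h).2 hker
    have hzero : h = 0 := by
      by_contra hne
      have hnorm_ne : ‖h‖ ≠ 0 := by simpa using norm_ne_zero_iff.2 hne
      set h' : ↥N := ⟨h, hmem⟩ with hh'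
      set u : ↥N := ‖h‖⁻¹ • h' with hu
      have hucoe : (u : Fin n → ℝ) = ‖h‖⁻¹ • h := rfl
      have hunorm : ‖u‖ = 1 := by
        have h5 : ‖u‖ = ‖(u : Fin n → ℝ)‖ := rfl
        rw [h5, hucoe, norm_smul, norm_inv, norm_norm, inv_mul_cancel₀ hnorm_ne]
      exact hsph ⟨u, by simpa using hunorm⟩
    rw [hzero]
    simp

lemma kerpos_cert {m n : ℕ} (A : Matrix (Fin m) (Fin n) ℝ) (xhat : Fin n → ℝ)
    (hk : ∀ h : Fin n → ℝ, A.mulVec h = 0 → h ≠ 0 → 0 < phi xhat h) :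
    ∃ w : Fin m → ℝ,
      (∀ j : Fin n, xhat j ≠ 0 → Aᵀ.mulVec w j = Real.sign (xhat j)) ∧
      (∀ j : Fin n, xhat j = 0 → |Aᵀ.mulVec w j| < 1) := by
  classical
  obtain ⟨ρ, hρ0, hρ1, hρ⟩ := rho_exists A xhat hk
  set c : Fin n → ℝ := fun j => if xhat j = 0 then 0 else Real.sign (xhat j) with hc
  set lfull : (Fin n → ℝ) →ₗ[ℝ] ℝ :=
    -(∑ j : Fin n, c j • LinearMap.proj j) with hlfull
  have hlapp : ∀ x : Fin n → ℝ, lfull x = -∑ j, c j * x j := by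
    intro x
    rw [hlfull, LinearMap.neg_apply, LinearMap.sum_apply]
    simp only [LinearMap.smul_apply, LinearMap.proj_apply, smul_eq_mul]
  set p : (Fin n → ℝ) → ℝ := fun x => ρ * ∑ j, (if xhat j = 0 then |x j| else 0) with hp
  set N : Submodule ℝ (Fin n → ℝ) := LinearMap.ker (Matrix.mulVecLin A) with hN
  have hmemN : ∀ h : Fin n → ℝ, h ∈ N ↔ A.mulVec h = 0 := by
    intro h; rw [hN, LinearMap.mem_ker, Matrix.mulVecLin_apply]
  set pm : (Fin n → ℝ) →ₗ.[ℝ] ℝ := lfull.toPMap N with hpm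
  have hNhom : ∀ t : ℝ, 0 < t → ∀ x : Fin n → ℝ, p (t • x) = t * p x := by
    intro t ht x
    rw [hp]
    simp only
    rw [← mul_assoc, mul_comm t ρ, mul_assoc]
    congr 1
    rw [Finset.mul_sum]
    apply Finset.sum_congr rfl
    intro j _
    by_cases hj : xhat j = 0 <;> simp [hj, abs_mul, abs_of_pos ht]
  have hNadd : ∀ x y : Fin n → ℝ, p (x + y) ≤ p x + p y := by
    intro x y
    rw [hp]
    simp only
    rw [← mul_add]
    apply mul_le_mul_of_nonneg_left _ hρ0
    rw [← Finset.sum_add_distrib]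
    apply Finset.sum_le_sum
    intro j _
    by_cases hj : xhat j = 0 <;> simp [hj, abs_add_le]
  have hf : ∀ x : pm.domain, pm x ≤ p x := by
    intro x
    have h6 : (pm x : ℝ) = lfull x.1 := LinearMap.toPMap_apply lfull N x
    rw [h6, hlapp]
    exact hρ x.1 ((hmemN x.1).1 x.2)
  obtain ⟨g, hg1, hg2⟩ := exists_extension_of_le_sublinear pm p hNhom hNadd hf
  set u : Fin n → ℝ := fun j => g (fun k => if j = k then 1 else 0) with hu
  have hgrepr : ∀ x : Fin n → ℝ, g x = ∑ j, x j * u j := by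
    intro x
    conv_lhs => rw [pi_eq_sum_univ x]
    rw [map_sum]
    apply Finset.sum_congr rfl
    intro j _
    rw [LinearMap.map_smul, smul_eq_mul, hu]
  have hpe : ∀ j : Fin n, p (fun k => if j = k then (1:ℝ) else 0)
      = if xhat j = 0 then ρ else 0 := by
    intro j
    rw [hp]
    simp only
    have : ∑ k, (if xhat k = 0 then |if j = k then (1:ℝ) else 0| else 0)
        = if xhat j = 0 then 1 else 0 := by
      rw [Finset.sum_eq_single j]
      · by_cases hj : xhat j = 0 <;> simp [hj]
      · intro k _ hkj
        by_cases hk : xhat k = 0 <;> simp [hk, Ne.symm hkj]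
      · intro hcon; exact absurd (Finset.mem_univ j) hcon
    rw [this]
    by_cases hj : xhat j = 0 <;> simp [hj]
  have hneg : ∀ x : Fin n → ℝ, g (-x) = - g x := fun x => map_neg g x
  have hu_on : ∀ j : Fin n, xhat j ≠ 0 → u j = 0 := by
    intro j hj
    have h1 : u j ≤ 0 := by
      have := hg2 (fun k => if j = k then (1:ℝ) else 0)
      rw [hpe j] at this
      simpa [hu, hj] using this
    have h2 : -u j ≤ 0 := by
      have := hg2 (-(fun k => if j = k then (1:ℝ) else 0))
      rw [hneg] at this
      have hpneg : p (-(fun k => if j = k then (1:ℝ) else 0))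
          = if xhat j = 0 then ρ else 0 := by
        have heq : (-(fun k => if j = k then (1:ℝ) else 0))
            = fun k => if j = k then (-1:ℝ) else 0 := by
          funext k; by_cases hk : j = k <;> simp [hk]
        rw [heq, hp]
        simp only
        have : ∑ k, (if xhat k = 0 then |if j = k then (-1:ℝ) else 0| else 0)
            = if xhat j = 0 then 1 else 0 := by
          rw [Finset.sum_eq_single j]
          · by_cases hjj : xhat j = 0 <;> simp [hjj]
          · intro k _ hkj
            by_cases hk : xhat k = 0 <;> simp [hk, Ne.symm hkj]
          · intro hcon; exact absurd (Finset.mem_univ j) hcon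
        rw [this]
        by_cases hjj : xhat j = 0 <;> simp [hjj]
      rw [hpneg] at this
      simpa [hu, hj] using this
    have : u j = 0 := le_antisymm h1 (by linarith)
    exact this
  have hu_off : ∀ j : Fin n, xhat j = 0 → |u j| ≤ ρ := by
    intro j hj
    have h1 : u j ≤ ρ := by
      have := hg2 (fun k => if j = k then (1:ℝ) else 0)
      rw [hpe j] at this
      simpa [hu, hj] using this
    have h2 : -u j ≤ ρ := by
      have := hg2 (-(fun k => if j = k then (1:ℝ) else 0))
      rw [hneg] at this
      have heq : (-(fun k => if j = k then (1:ℝ) else 0))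
          = fun k => if j = k then (-1:ℝ) else 0 := by
        funext k; by_cases hk : j = k <;> simp [hk]
      have hpneg : p (fun k => if j = k then (-1:ℝ) else 0) = ρ := by
        rw [hp]
        simp only
        have : ∑ k, (if xhat k = 0 then |if j = k then (-1:ℝ) else 0| else 0) = 1 := by
          rw [Finset.sum_eq_single j]
          · simp [hj]
          · intro k _ hkj
            by_cases hk : xhat k = 0 <;> simp [hk, Ne.symm hkj]
          · intro hcon; exact absurd (Finset.mem_univ j) hcon
        rw [this, mul_one]
      rw [heq, hpneg] at this
      simpa [hu] using this
    exact abs_le.2 ⟨by linarith, h1⟩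
  set y : Fin n → ℝ := fun j => c j + u j with hy
  have hyorth : ∀ h : Fin n → ℝ, A.mulVec h = 0 → ∑ j, y j * h j = 0 := by
    intro h hker
    have hmem : h ∈ N := (hmemN h).2 hker
    have hgh : g h = -∑ j, c j * h j := by
      have h6 : (pm ⟨h, hmem⟩ : ℝ) = lfull h := LinearMap.toPMap_apply lfull N ⟨h, hmem⟩
      have h7 := hg1 ⟨h, hmem⟩
      rw [h6, hlapp] at h7
      exact h7
    have hgh2 : g h = ∑ j, h j * u j := hgrepr h
    have : ∑ j, y j * h j = ∑ j, c j * h j + ∑ j, h j * u j := by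
      rw [← Finset.sum_add_distrib]
      apply Finset.sum_congr rfl
      intro j _
      rw [hy]; ring
    rw [this, ← hgh2, hgh]
    ring
  obtain ⟨w, hw⟩ := dual_range A y hyorth
  refine ⟨w, ?_, ?_⟩
  · intro j hj
    rw [hw]
    show y j = Real.sign (xhat j)
    simp [hy, hc, hj, hu_on j hj]
  · intro j hj
    rw [hw]
    show |y j| < 1
    have h5 : y j = u j := by simp [hy, hc, hj]
    rw [h5]
    exact lt_of_le_of_lt (hu_off j hj) hρ1


/-- The strong source condition: `x̂` is the unique optimal solution of the basis pursuit
problem `min{‖x‖₁ : Ax = Ax̂}` if and only if the columns of `A` indexed by `supp(x̂)` are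
linearly independent and there is `w` with `(Aᵀw)ⱼ = sign(x̂ⱼ)` on the support and
`|(Aᵀw)ⱼ| < 1` off the support. -/
theorem strong_source_condition
    (m n : ℕ) (A : Matrix (Fin m) (Fin n) ℝ) (xhat : Fin n → ℝ) :
    (∀ x : Fin n → ℝ, A.mulVec x = A.mulVec xhat → x ≠ xhat →
        (∑ i, |xhat i|) < ∑ i, |x i|) ↔
      (LinearIndependent ℝ (fun j : {j : Fin n // xhat j ≠ 0} => fun i => A i j.1) ∧
        ∃ w : Fin m → ℝ,
          (∀ j : Fin n, xhat j ≠ 0 → Aᵀ.mulVec w j = Real.sign (xhat j)) ∧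
          (∀ j : Fin n, xhat j = 0 → |Aᵀ.mulVec w j| < 1)) := by
  constructor
  · intro hu
    have hk := uniq_kerpos A xhat hu
    exact ⟨kerpos_linindep A xhat hk, kerpos_cert A xhat hk⟩
  · rintro ⟨hli, w, hw1, hw2⟩
    exact kerpos_uniq A xhat (cert_kerpos A xhat hli w hw1 hw2)
end

section
/- For every x ∈ ℝⁿ, the number of nonzero entries of x satisfies ‖x‖₀ = min{ ‖u‖₁ : u ∈ ℝⁿ, ‖x‖₁ = xᵀu, −1 ≤ uᵢ ≤ 1 for all i }. That is, the minimum of the ℓ₁-norm of u over all vectors u in the box [−1, 1]ⁿ with xᵀu = ‖x‖₁ is attained and equals ‖x‖₀. -/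
lemma card0_eq {n : ℕ} (x : Fin n → ℝ) :
    card0 x = (Finset.univ.filter (fun i => x i ≠ 0)).card := by
  rw [card0, ← Set.ncard_coe_finset]
  congr 1
  ext i
  simp

/-- The exact variational reformulation of cardinality (Yuan–Ghanem): for every `x ∈ ℝⁿ`,
`‖x‖₀ = min{‖u‖₁ : ‖x‖₁ = xᵀu, -1 ≤ u ≤ 1}`, the minimum being attained. -/
theorem card_eq_min_l1_aux (n : ℕ) (x : Fin n → ℝ) :
    IsLeast {t : ℝ | ∃ u : Fin n → ℝ,
        (∀ i, -1 ≤ u i ∧ u i ≤ 1) ∧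
        (∑ i, |x i|) = (∑ i, x i * u i) ∧
        t = ∑ i, |u i|}
      (card0 x : ℝ) := by
  constructor
  · refine ⟨fun i => Real.sign (x i), fun i => by
      beta_reduce
      rcases lt_trichotomy (x i) 0 with h | h | h
      · rw [Real.sign_of_neg h]; norm_num
      · simp [h]
      · rw [Real.sign_of_pos h]; norm_num, ?_, ?_⟩
    · refine Finset.sum_congr rfl fun i _ => ?_
      beta_reduce
      rcases lt_trichotomy (x i) 0 with h | h | h
      · rw [Real.sign_of_neg h, abs_of_neg h]; ring
      · simp [h]
      · rw [Real.sign_of_pos h, abs_of_pos h]; ring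
    · rw [card0_eq]
      rw [Finset.card_filter]
      push_cast
      refine Finset.sum_congr rfl fun i _ => ?_
      beta_reduce
      rcases lt_trichotomy (x i) 0 with h | h | h
      · rw [Real.sign_of_neg h]; simp [h.ne]
      · simp [h]
      · rw [Real.sign_of_pos h]; simp [h.ne']
  · rintro t ⟨u, hbox, heq, rfl⟩
    have hterm : ∀ i ∈ Finset.univ, x i * u i ≤ |x i| := by
      intro i _
      calc x i * u i ≤ |x i * u i| := le_abs_self _
        _ = |x i| * |u i| := abs_mul _ _
        _ ≤ |x i| * 1 := by
            exact mul_le_mul_of_nonneg_left (abs_le.mpr ⟨(hbox i).1, (hbox i).2⟩) (abs_nonneg _)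
        _ = |x i| := mul_one _
    have hall : ∀ i ∈ Finset.univ, x i * u i = |x i| := by
      have := (Finset.sum_eq_sum_iff_of_le hterm).mp heq.symm
      intro i hi; exact this i hi
    have hu1 : ∀ i, x i ≠ 0 → |u i| = 1 := by
      intro i hx
      have h1 : |u i| ≤ 1 := abs_le.mpr ⟨(hbox i).1, (hbox i).2⟩
      have h2 : (1:ℝ) ≤ |u i| := by
        have := hall i (Finset.mem_univ i)
        have habs : |x i| ≤ |x i| * |u i| := by
          calc |x i| = x i * u i := (hall i (Finset.mem_univ i)).symm
            _ ≤ |x i * u i| := le_abs_self _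
            _ = |x i| * |u i| := abs_mul _ _
        have hxpos : 0 < |x i| := abs_pos.mpr hx
        nlinarith
      linarith
    rw [card0_eq, Finset.card_filter]
    push_cast
    calc (∑ i, if x i ≠ 0 then (1:ℝ) else 0) ≤ ∑ i, |u i| := by
          refine Finset.sum_le_sum fun i _ => ?_
          by_cases hx : x i ≠ 0
          · simp [hx, hu1 i hx]
          · simp [hx, abs_nonneg]
end

section
/- Let x ∈ ℝⁿ and k ∈ ℕ. Then ‖x‖₀ ≤ k if and only if there exists u ∈ ℝⁿ with ‖u‖₁ ≤ k, ‖x‖₁ = xᵀu, and −1 ≤ uᵢ ≤ 1 for all i. -/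
/-- Continuous reformulation of the cardinality constraint (eq. (4.4)):
`‖x‖₀ ≤ k` iff there is `u ∈ [-1,1]ⁿ` with `‖u‖₁ ≤ k` and `‖x‖₁ = xᵀu`. -/
theorem card_le_iff_exists_u (n : ℕ) (x : Fin n → ℝ) (k : ℕ) :
    card0 x ≤ k ↔
      ∃ u : Fin n → ℝ,
        (∑ i, |u i|) ≤ (k : ℝ) ∧
        (∑ i, |x i|) = (∑ i, x i * u i) ∧
        (∀ i, -1 ≤ u i ∧ u i ≤ 1) := by
  constructor
  · intro hk
    refine ⟨fun i => if x i < 0 then -1 else if 0 < x i then 1 else 0, ?_, ?_, ?_⟩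
    · have h : ∀ i, |if x i < 0 then (-1:ℝ) else if 0 < x i then 1 else 0|
          = if x i ≠ 0 then 1 else 0 := by
        intro i
        rcases lt_trichotomy (x i) 0 with h | h | h
        · simp [h, not_lt.2 h.le, h.ne]
        · simp [h]
        · simp [h, not_lt.2 h.le, h.ne']
      calc (∑ i, |if x i < 0 then (-1:ℝ) else if 0 < x i then 1 else 0|)
          = ∑ i, if x i ≠ 0 then (1:ℝ) else 0 := by simp_rw [h]
        _ = ((Finset.univ.filter (fun i => x i ≠ 0)).card : ℝ) := by
            rw [Finset.sum_ite, Finset.sum_const, Finset.sum_const]; simp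
        _ ≤ (k : ℝ) := by exact_mod_cast (card0_eq x ▸ hk)
    · refine Finset.sum_congr rfl fun i _ => ?_
      rcases lt_trichotomy (x i) 0 with h | h | h
      · simp [h, abs_of_neg h]
      · simp [h]
      · simp [abs_of_pos h, not_lt.2 h.le, h]
    · intro i
      rcases lt_trichotomy (x i) 0 with h | h | h <;> simp [h, not_lt.2 h.le]
  · rintro ⟨u, hu1, heq, hbox⟩
    have habs : ∀ i, |u i| ≤ 1 := fun i => abs_le.2 (hbox i)
    have hterm : ∀ i, x i * u i ≤ |x i| := fun i => by
      calc x i * u i ≤ |x i * u i| := le_abs_self _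
        _ = |x i| * |u i| := abs_mul _ _
        _ ≤ |x i| * 1 := by
            exact mul_le_mul_of_nonneg_left (habs i) (abs_nonneg _)
        _ = |x i| := mul_one _
    have heqterm : ∀ i ∈ Finset.univ, x i * u i = |x i| := by
      exact (Finset.sum_eq_sum_iff_of_le (fun i _ => hterm i)).1 heq.symm
    have hone : ∀ i, x i ≠ 0 → (1:ℝ) ≤ |u i| := by
      intro i hi
      have h := heqterm i (Finset.mem_univ i)
      have : |x i| ≤ |x i| * |u i| := by
        calc |x i| = x i * u i := h.symm
          _ ≤ |x i * u i| := le_abs_self _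
          _ = |x i| * |u i| := abs_mul _ _
      have hpos : 0 < |x i| := abs_pos.2 hi
      nlinarith
    have : ((card0 x : ℝ)) ≤ (k : ℝ) := by
      rw [card0_eq]
      calc ((Finset.univ.filter (fun i => x i ≠ 0)).card : ℝ)
          = ∑ i ∈ Finset.univ.filter (fun i => x i ≠ 0), (1:ℝ) := by simp
        _ ≤ ∑ i ∈ Finset.univ.filter (fun i => x i ≠ 0), |u i| := by
            refine Finset.sum_le_sum fun i hi => hone i ?_
            simpa using hi
        _ ≤ ∑ i, |u i| := by
            refine Finset.sum_le_sum_of_subset_of_nonneg (Finset.filter_subset _ _)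
              fun i _ _ => abs_nonneg _
        _ ≤ (k : ℝ) := hu1
    exact_mod_cast this
end

section
/- Let x ∈ ℝⁿ and k ∈ ℕ. Then ‖x‖₀ ≤ k if and only if there exist t ∈ ℝ and y, q, w ∈ ℝⁿ such that ‖q‖₁ + (k+1)·‖w‖_∞ ≤ t ≤ xᵀy, x = q + w, ‖y‖₁ ≤ k, and ‖y‖_∞ ≤ 1. -/
/-- The ℓ∞-norm of a vector in `ℝⁿ` (the sup norm, which is the norm of the Pi type). -/
noncomputable def linftyNorm {n : ℕ} (x : Fin n → ℝ) : ℝ := ‖x‖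

/-- Hempel–Goulart (Theorem 1): `‖x‖₀ ≤ k` iff there exist `t ∈ ℝ` and `y, q, w ∈ ℝⁿ` with
`‖q‖₁ + (k+1)‖w‖_∞ ≤ t ≤ xᵀy`, `x = q + w`, `‖y‖₁ ≤ k` and `‖y‖_∞ ≤ 1`. -/
theorem card_le_iff_hempel_goulart (n : ℕ) (x : Fin n → ℝ) (k : ℕ) :
    card0 x ≤ k ↔
      ∃ (t : ℝ) (y q w : Fin n → ℝ),
        (∑ i, |q i|) + ((k : ℝ) + 1) * linftyNorm w ≤ t ∧
        t ≤ ∑ i, x i * y i ∧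
        x = q + w ∧
        (∑ i, |y i|) ≤ (k : ℝ) ∧
        linftyNorm y ≤ 1 := by
  classical
  have hcard : card0 x = (Finset.univ.filter (fun i => x i ≠ 0)).card := by
    rw [card0, ← Set.ncard_coe_finset]
    congr 1
    ext i; simp
  constructor
  · intro hk
    set y : Fin n → ℝ := fun i => if x i = 0 then 0 else x i / |x i| with hy
    have habs : ∀ i, x i * y i = |x i| := by
      intro i
      by_cases h : x i = 0
      · simp [hy, h]
      · have hab : |x i| ≠ 0 := abs_ne_zero.mpr h
        simp only [hy, if_neg h]
        rw [mul_div_assoc', ← abs_mul_abs_self, mul_div_assoc, div_self hab, mul_one]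
    have hyabs : ∀ i, |y i| = if x i = 0 then 0 else 1 := by
      intro i
      by_cases h : x i = 0
      · simp [hy, h]
      · have hab : |x i| ≠ 0 := abs_ne_zero.mpr h
        simp [hy, if_neg h, abs_div, abs_abs, div_self hab]
    refine ⟨∑ i, |x i|, y, x, 0, ?_, ?_, by simp, ?_, ?_⟩
    · simp [linftyNorm]
    · simp [habs]
    · have : (∑ i, |y i|) = ((Finset.univ.filter (fun i => x i ≠ 0)).card : ℝ) := by
        rw [Finset.card_eq_sum_ones, Nat.cast_sum]
        rw [← Finset.sum_filter_add_sum_filter_not Finset.univ (fun i => x i ≠ 0) (fun i => |y i|)]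
        simp only [hyabs]
        rw [Finset.sum_ite_of_false, Finset.sum_ite_of_true]
        · simp
        · intro i hi; simpa using (Finset.mem_filter.mp hi).2
        · intro i hi
          have := (Finset.mem_filter.mp hi).2
          simpa using this
      rw [this]
      exact_mod_cast hcard ▸ hk
    · rw [linftyNorm]
      refine pi_norm_le_iff_of_nonneg zero_le_one |>.mpr fun i => ?_
      rw [Real.norm_eq_abs, hyabs i]
      split <;> norm_num
  · rintro ⟨t, y, q, w, h1, h2, hx, h3, h4⟩
    have hwnn : (0:ℝ) ≤ ‖w‖ := norm_nonneg w
    have hwabs : ∀ i, |w i| ≤ ‖w‖ := fun i => by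
      simpa [Real.norm_eq_abs] using norm_le_pi_norm w i
    have hyabs : ∀ i, |y i| ≤ 1 := fun i => by
      have := norm_le_pi_norm y i
      rw [Real.norm_eq_abs] at this
      exact this.trans h4
    have hynn : ∀ i, (0:ℝ) ≤ |y i| := fun i => abs_nonneg _
    -- bound ∑ x i * y i ≤ ∑|q i| + k‖w‖
    have hbound : (∑ i, x i * y i) ≤ (∑ i, |q i|) + (k:ℝ) * ‖w‖ := by
      have hsplit : (∑ i, x i * y i) = (∑ i, q i * y i) + ∑ i, w i * y i := by
        rw [← Finset.sum_add_distrib]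
        refine Finset.sum_congr rfl fun i _ => ?_
        rw [hx]; simp [add_mul]
      have hq : (∑ i, q i * y i) ≤ ∑ i, |q i| := by
        refine Finset.sum_le_sum fun i _ => ?_
        calc q i * y i ≤ |q i * y i| := le_abs_self _
          _ = |q i| * |y i| := abs_mul _ _
          _ ≤ |q i| * 1 := mul_le_mul_of_nonneg_left (hyabs i) (abs_nonneg _)
          _ = |q i| := mul_one _
      have hw : (∑ i, w i * y i) ≤ (k:ℝ) * ‖w‖ := by
        have : (∑ i, w i * y i) ≤ ∑ i, ‖w‖ * |y i| := by
          refine Finset.sum_le_sum fun i _ => ?_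
          calc w i * y i ≤ |w i * y i| := le_abs_self _
            _ = |w i| * |y i| := abs_mul _ _
            _ ≤ ‖w‖ * |y i| := mul_le_mul_of_nonneg_right (hwabs i) (abs_nonneg _)
        refine this.trans ?_
        rw [← Finset.mul_sum]
        calc ‖w‖ * ∑ i, |y i| ≤ ‖w‖ * (k:ℝ) := mul_le_mul_of_nonneg_left h3 hwnn
          _ = (k:ℝ) * ‖w‖ := mul_comm _ _
      rw [hsplit]; linarith
    have hw0 : ‖w‖ = 0 := by
      have := h1.trans (h2.trans hbound)
      rw [linftyNorm] at this
      nlinarith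
    have hweq : w = 0 := norm_eq_zero.mp hw0
    have hxq : x = q := by rw [hx, hweq]; simp
    subst hxq
    rw [hweq] at hx
    have hxy_le : (∑ i, x i * y i) ≤ ∑ i, |x i| := by
      refine Finset.sum_le_sum fun i _ => ?_
      calc x i * y i ≤ |x i * y i| := le_abs_self _
        _ = |x i| * |y i| := abs_mul _ _
        _ ≤ |x i| * 1 := mul_le_mul_of_nonneg_left (hyabs i) (abs_nonneg _)
        _ = |x i| := mul_one _
    have hle_t : (∑ i, |x i|) ≤ t := by
      rw [linftyNorm, hw0] at h1; linarith
    have heq : (∑ i, x i * y i) = ∑ i, |x i| := le_antisymm hxy_le (by linarith)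
    -- termwise equality
    have hterm : ∀ i, x i * y i = |x i| := by
      intro i
      by_contra hne
      have hlt : x i * y i < |x i| := lt_of_le_of_ne (by
        calc x i * y i ≤ |x i * y i| := le_abs_self _
          _ = |x i| * |y i| := abs_mul _ _
          _ ≤ |x i| * 1 := mul_le_mul_of_nonneg_left (hyabs i) (abs_nonneg _)
          _ = |x i| := mul_one _) hne
      have : (∑ j, x j * y j) < ∑ j, |x j| := by
        refine Finset.sum_lt_sum (fun j _ => ?_) ⟨i, Finset.mem_univ i, hlt⟩
        calc x j * y j ≤ |x j * y j| := le_abs_self _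
          _ = |x j| * |y j| := abs_mul _ _
          _ ≤ |x j| * 1 := mul_le_mul_of_nonneg_left (hyabs j) (abs_nonneg _)
          _ = |x j| := mul_one _
      linarith [heq.le, heq.ge]
    -- on the support |y i| ≥ 1
    have hy1 : ∀ i, x i ≠ 0 → (1:ℝ) ≤ |y i| := by
      intro i hi
      have habpos : (0:ℝ) < |x i| := abs_pos.mpr hi
      have : |x i| ≤ |x i| * |y i| := by
        calc |x i| = x i * y i := (hterm i).symm
          _ ≤ |x i * y i| := le_abs_self _
          _ = |x i| * |y i| := abs_mul _ _
      nlinarith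
    set S := Finset.univ.filter (fun i => x i ≠ 0) with hS
    have hsum : (S.card : ℝ) ≤ ∑ i, |y i| := by
      calc (S.card : ℝ) = ∑ _i ∈ S, (1:ℝ) := by simp
        _ ≤ ∑ i ∈ S, |y i| := Finset.sum_le_sum fun i hi =>
            hy1 i (by simpa using (Finset.mem_filter.mp hi).2)
        _ ≤ ∑ i, |y i| := Finset.sum_le_sum_of_subset_of_nonneg (Finset.subset_univ S)
            (fun i _ _ => abs_nonneg _)
    rw [hcard]
    exact_mod_cast hsum.trans h3
end

section
/- Let A ∈ ℝ^{m×n} with nontrivial nullspace (ker A ≠ {0}), and define spark(A) = min{‖x‖₀ : Ax = 0, x ≠ 0}. Let k ∈ ℕ. Then the following are equivalent: (a) 2k < spark(A); (b) for every x̂ ∈ ℝⁿ with ‖x̂‖₀ ≤ k, x̂ is the unique optimal solution of the problem min{‖x‖₀ : Ax = Ax̂}, i.e., every x ≠ x̂ with Ax = Ax̂ satisfies ‖x‖₀ > ‖x̂‖₀. -/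
/-- The spark of a matrix: the minimum number of nonzeros of a nonzero nullspace vector. -/
noncomputable def spark {m n : ℕ} (A : Matrix (Fin m) (Fin n) ℝ) : ℕ :=
  sInf {k : ℕ | ∃ x : Fin n → ℝ, x ≠ 0 ∧ A.mulVec x = 0 ∧ card0 x = k}

lemma card0_eq_card {n : ℕ} (x : Fin n → ℝ) :
    card0 x = (Finset.univ.filter fun i => x i ≠ 0).card := by
  rw [card0, Set.ncard_eq_toFinset_card']
  congr 1
  ext i
  simp

lemma card0_sub_le {n : ℕ} (x y : Fin n → ℝ) :
    card0 (x - y) ≤ card0 x + card0 y := by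
  simp only [card0_eq_card]
  calc (Finset.univ.filter fun i => (x - y) i ≠ 0).card
      ≤ ((Finset.univ.filter fun i => x i ≠ 0) ∪
          (Finset.univ.filter fun i => y i ≠ 0)).card := by
        apply Finset.card_le_card
        intro i hi
        simp only [Finset.mem_filter, Finset.mem_union, Finset.mem_univ, true_and,
          Pi.sub_apply] at hi ⊢
        by_contra hc
        push_neg at hc
        simp [hc.1, hc.2] at hi
    _ ≤ _ := Finset.card_union_le _ _

/-- Classical uniqueness characterization for sparse recovery: all `k`-sparse vectors `x̂`
are the respective unique optimal solutions of `min{‖x‖₀ : Ax = Ax̂}` if and only if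
`2k < spark(A)`. -/
theorem k_sparse_unique_iff_spark
    (m n : ℕ) (A : Matrix (Fin m) (Fin n) ℝ)
    (hker : ∃ x : Fin n → ℝ, x ≠ 0 ∧ A.mulVec x = 0) (k : ℕ) :
    2 * k < spark A ↔
      ∀ xhat : Fin n → ℝ, card0 xhat ≤ k →
        ∀ x : Fin n → ℝ, A.mulVec x = A.mulVec xhat → x ≠ xhat →
          card0 xhat < card0 x := by
  constructor
  · intro h xhat hxhat x hAx hne
    by_contra hle
    push_neg at hle
    have hz : x - xhat ≠ 0 := sub_ne_zero.mpr hne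
    have hAz : A.mulVec (x - xhat) = 0 := by
      rw [Matrix.mulVec_sub, hAx, sub_self]
    have hsp : spark A ≤ card0 (x - xhat) :=
      Nat.sInf_le ⟨x - xhat, hz, hAz, rfl⟩
    have hb := card0_sub_le x xhat
    omega
  · intro h
    by_contra hsp
    push_neg at hsp
    obtain ⟨z0, hz0, hAz0⟩ := hker
    have hne : {k : ℕ | ∃ x : Fin n → ℝ, x ≠ 0 ∧ A.mulVec x = 0 ∧ card0 x = k}.Nonempty :=
      ⟨card0 z0, z0, hz0, hAz0, rfl⟩
    obtain ⟨z, hz, hAz, hzc⟩ := Nat.sInf_mem hne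
    set S : Finset (Fin n) := Finset.univ.filter fun i => z i ≠ 0 with hSdef
    have hScard : S.card = spark A := by rw [spark, ← hzc, card0_eq_card]
    obtain ⟨T, hTS, hTcard⟩ := Finset.exists_subset_card_eq (s := S) (n := min S.card k) (min_le_left _ _)
    set xhat : Fin n → ℝ := fun i => if i ∈ T then -z i else 0 with hxhatdef
    set x : Fin n → ℝ := fun i => z i + xhat i with hxdef
    have hAxh : A.mulVec x = A.mulVec xhat := by
      have : x = z + xhat := rfl
      rw [this, Matrix.mulVec_add, hAz, zero_add]
    have hxne : x ≠ xhat := by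
      intro heq
      apply hz
      funext i
      have := congrFun heq i
      simpa [hxdef] using this
    have hcxhat : card0 xhat = T.card := by
      rw [card0_eq_card]
      congr 1
      ext i
      simp only [Finset.mem_filter, Finset.mem_univ, true_and, hxhatdef]
      by_cases hiT : i ∈ T
      · have hiS : i ∈ S := hTS hiT
        simp only [hSdef, Finset.mem_filter, Finset.mem_univ, true_and] at hiS
        simp [hiT, hiS]
      · simp [hiT]
    have hcx : card0 x = (S \ T).card := by
      rw [card0_eq_card]
      congr 1
      ext i
      simp only [Finset.mem_filter, Finset.mem_univ, true_and, Finset.mem_sdiff, hxdef,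
        hxhatdef, hSdef]
      by_cases hiT : i ∈ T
      · simp [hiT]
      · simp [hiT]
    have hsd : (S \ T).card = S.card - T.card := Finset.card_sdiff_of_subset hTS
    have hk : T.card ≤ k := hTcard ▸ min_le_right _ _
    have hlt := h xhat (hcxhat ▸ hk) x hAxh hxne
    rw [hcxhat, hcx, hsd] at hlt
    rcases le_total S.card k with hc | hc
    · rw [min_eq_left hc] at hTcard
      omega
    · rw [min_eq_right hc] at hTcard
      omega
end

section
/- Let A ∈ ℝ^{m×n} and k ∈ ℕ. Say A satisfies the nullspace property (NSP) of order k if for every nonzero x ∈ ℝⁿ with Ax = 0 and every index set S ⊆ [n] with |S| ≤ k, one has Σ_{i∈S} |x_i| < (1/2)·Σ_{i∈[n]} |x_i| (equivalently, the order-k nullspace constant α_k is < 1/2). Then A satisfies the NSP of order k if and only if every x̂ ∈ ℝⁿ with ‖x̂‖₀ ≤ k is the unique optimal solution of the basis pursuit problem min{‖x‖₁ : Ax = Ax̂}, i.e., every x ≠ x̂ with Ax = Ax̂ satisfies ‖x‖₁ > ‖x̂‖₁. -/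
/-- The nullspace property (NSP) of order `k`: every nonzero nullspace vector has less than
half of its ℓ₁-mass on any index set of size at most `k`. -/
def NSP {m n : ℕ} (A : Matrix (Fin m) (Fin n) ℝ) (k : ℕ) : Prop :=
  ∀ x : Fin n → ℝ, x ≠ 0 → A.mulVec x = 0 →
    ∀ S : Finset (Fin n), S.card ≤ k →
      (∑ i ∈ S, |x i|) < (1 / 2) * ∑ i, |x i|

/-- Uniform sparse recovery (ℓ₀–ℓ₁-equivalence): `A` satisfies the NSP of order `k` iff
every `k`-sparse `x̂` is the unique optimal solution of the basis pursuit problem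
`min{‖x‖₁ : Ax = Ax̂}`. -/
theorem nsp_iff_uniform_l1_recovery
    (m n : ℕ) (A : Matrix (Fin m) (Fin n) ℝ) (k : ℕ) :
    NSP A k ↔
      ∀ xhat : Fin n → ℝ, card0 xhat ≤ k →
        ∀ x : Fin n → ℝ, A.mulVec x = A.mulVec xhat → x ≠ xhat →
          (∑ i, |xhat i|) < ∑ i, |x i| := by
  constructor
  · intro hNSP xhat hxhat x hAx hne
    set v : Fin n → ℝ := x - xhat with hv
    have hvne : v ≠ 0 := sub_ne_zero.mpr hne
    have hAv : A.mulVec v = 0 := by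
      rw [hv, Matrix.mulVec_sub, hAx, sub_self]
    set S : Finset (Fin n) := Finset.univ.filter (fun i => xhat i ≠ 0) with hSdef
    have hcard : S.card ≤ k := by
      have hceq : card0 xhat = S.card := by
        have : {i | xhat i ≠ 0} = (↑S : Set (Fin n)) := by
          ext i; simp [hSdef]
        rw [card0, this, Set.ncard_coe_finset]
      omega
    have hlt := hNSP v hvne hAv S hcard
    have hsplitv : ∑ i, |v i| = ∑ i ∈ S, |v i| + ∑ i ∈ Sᶜ, |v i| :=
      (Finset.sum_add_sum_compl S _).symm
    have h1 : ∑ i ∈ S, |v i| < ∑ i ∈ Sᶜ, |v i| := by nlinarith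
    have hx : ∑ i, |x i| = ∑ i ∈ S, |x i| + ∑ i ∈ Sᶜ, |x i| :=
      (Finset.sum_add_sum_compl S _).symm
    have hxhat_sum : ∑ i, |xhat i| = ∑ i ∈ S, |xhat i| := by
      rw [← Finset.sum_add_sum_compl S (fun i => |xhat i|)]
      have hz : ∑ i ∈ Sᶜ, |xhat i| = 0 := by
        apply Finset.sum_eq_zero
        intro i hi
        simp only [hSdef, Finset.mem_compl, Finset.mem_filter, Finset.mem_univ,
          true_and, not_not] at hi
        simp [hi]
      linarith
    have hS1 : ∑ i ∈ S, |xhat i| - ∑ i ∈ S, |v i| ≤ ∑ i ∈ S, |x i| := by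
      rw [← Finset.sum_sub_distrib]
      apply Finset.sum_le_sum
      intro i _
      have hxi : xhat i = x i - v i := by simp [hv]
      calc |xhat i| - |v i| ≤ |x i - v i| - |v i| := by rw [← hxi]
        _ ≤ (|x i| + |v i|) - |v i| := by
            have := abs_sub (x i) (v i); linarith
        _ = |x i| := by ring
    have hSc : ∑ i ∈ Sᶜ, |x i| = ∑ i ∈ Sᶜ, |v i| := by
      apply Finset.sum_congr rfl
      intro i hi
      simp only [hSdef, Finset.mem_compl, Finset.mem_filter, Finset.mem_univ,
        true_and, not_not] at hi
      simp [hv, hi]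
    linarith
  · intro hrec v hvne hAv S hScard
    set xhat : Fin n → ℝ := fun i => if i ∈ S then v i else 0 with hxhat
    set x : Fin n → ℝ := fun i => if i ∈ S then 0 else -(v i) with hxdef
    have hxv : x = xhat - v := by
      funext i
      by_cases h : i ∈ S <;> simp [hxdef, hxhat, h]
    have hcard0 : card0 xhat ≤ k := by
      have hsub : {i | xhat i ≠ 0} ⊆ (↑S : Set (Fin n)) := by
        intro i hi
        by_contra h
        simp only [Finset.mem_coe] at h
        simp [hxhat, h] at hi
      calc card0 xhat ≤ (↑S : Set (Fin n)).ncard :=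
            Set.ncard_le_ncard hsub (Set.toFinite _)
        _ = S.card := Set.ncard_coe_finset S
        _ ≤ k := hScard
    have hA : A.mulVec x = A.mulVec xhat := by
      rw [hxv, Matrix.mulVec_sub, hAv, sub_zero]
    have hxne : x ≠ xhat := by
      intro h
      apply hvne
      rw [hxv] at h
      exact sub_eq_self.mp h
    have hmain := hrec xhat hcard0 x hA hxne
    have e1 : ∑ i, |xhat i| = ∑ i ∈ S, |v i| := by
      rw [← Finset.sum_add_sum_compl S (fun i => |xhat i|)]
      have h1 : ∑ i ∈ S, |xhat i| = ∑ i ∈ S, |v i| :=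
        Finset.sum_congr rfl (fun i hi => by simp [hxhat, hi])
      have h2 : ∑ i ∈ Sᶜ, |xhat i| = 0 :=
        Finset.sum_eq_zero (fun i hi => by
          simp only [Finset.mem_compl] at hi; simp [hxhat, hi])
      linarith
    have e2 : ∑ i, |x i| = ∑ i ∈ Sᶜ, |v i| := by
      rw [← Finset.sum_add_sum_compl S (fun i => |x i|)]
      have h1 : ∑ i ∈ S, |x i| = 0 :=
        Finset.sum_eq_zero (fun i hi => by simp [hxdef, hi])
      have h2 : ∑ i ∈ Sᶜ, |x i| = ∑ i ∈ Sᶜ, |v i| :=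
        Finset.sum_congr rfl (fun i hi => by
          simp only [Finset.mem_compl] at hi; simp [hxdef, hi])
      linarith
    have hsplit : ∑ i, |v i| = ∑ i ∈ S, |v i| + ∑ i ∈ Sᶜ, |v i| :=
      (Finset.sum_add_sum_compl S _).symm
    rw [e1, e2] at hmain
    linarith
end

section
/- Let A ∈ ℝ^{m×n} with n ≥ 2 have unit Euclidean-norm columns (‖A_j‖₂ = 1 for all j), let μ(A) = max_{i≠j} |A_iᵀ A_j| be its mutual coherence, and for k ∈ ℕ with 1 ≤ k ≤ n let δ_k(A) be the order-k restricted isometry constant, i.e., the smallest δ ≥ 0 such that (1−δ)‖x‖₂² ≤ ‖Ax‖₂² ≤ (1+δ)‖x‖₂² holds for all x ∈ ℝⁿ with 1 ≤ ‖x‖₀ ≤ k. Then δ_k(A) ≤ (k−1)·μ(A). -/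
/-- Coherence bound on the restricted isometry constant: if `A` has unit Euclidean-norm
columns, `μ` is its mutual coherence (the maximum of `|A_pᵀ A_q|` over `p ≠ q`), and `δk`
is its order-`k` restricted isometry constant (the least `δ ≥ 0` such that
`(1-δ)‖x‖₂² ≤ ‖Ax‖₂² ≤ (1+δ)‖x‖₂²` for all `x` with `1 ≤ ‖x‖₀ ≤ k`), then
`δk ≤ (k-1)·μ`. -/
theorem ric_le_coherence_bound
    (m n : ℕ) (hn : 2 ≤ n) (A : Matrix (Fin m) (Fin n) ℝ)
    (hcols : ∀ j : Fin n, Real.sqrt (∑ i, (A i j) ^ 2) = 1)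
    (k : ℕ) (hk1 : 1 ≤ k) (hkn : k ≤ n)
    (μ : ℝ)
    (hμ : IsGreatest {v : ℝ | ∃ p q : Fin n, p ≠ q ∧ v = |∑ i, A i p * A i q|} μ)
    (δk : ℝ)
    (hδk : IsLeast {δ : ℝ | 0 ≤ δ ∧ ∀ x : Fin n → ℝ, 1 ≤ card0 x → card0 x ≤ k →
        ((1 - δ) * ∑ i, (x i) ^ 2 ≤ ∑ i, (A.mulVec x i) ^ 2 ∧
          (∑ i, (A.mulVec x i) ^ 2) ≤ (1 + δ) * ∑ i, (x i) ^ 2)} δk) :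
    δk ≤ ((k : ℝ) - 1) * μ := by
  obtain ⟨⟨p0, q0, hpq0, hμeq⟩, hub⟩ := hμ
  have hμ0 : 0 ≤ μ := hμeq ▸ abs_nonneg _
  have hkm : (0:ℝ) ≤ (k:ℝ) - 1 := by
    have : (1:ℝ) ≤ (k:ℝ) := by exact_mod_cast hk1
    linarith
  apply hδk.2
  refine ⟨mul_nonneg hkm hμ0, ?_⟩
  intro x h1 h2
  -- notation
  set g : Fin n → Fin n → ℝ := fun p q => ∑ i, A i p * A i q with hg
  have hdiag : ∀ p, g p p = 1 := by
    intro p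
    have h := (Real.sqrt_eq_one).mp (hcols p)
    simpa [hg, sq] using h
  have hoff : ∀ p q : Fin n, p ≠ q → |g p q| ≤ μ := fun p q h => hub ⟨p, q, h, rfl⟩
  -- support finset
  set S : Finset (Fin n) := Finset.univ.filter (fun i => x i ≠ 0) with hS
  have hcard : card0 x = S.card := by
    rw [card0]
    have : {i | x i ≠ 0} = (S : Set (Fin n)) := by
      ext i; simp [hS]
    rw [this, Set.ncard_coe_finset]
  have hSk : (S.card : ℝ) ≤ (k : ℝ) := by exact_mod_cast hcard ▸ h2
  set Q : ℝ := ∑ i, (x i) ^ 2 with hQ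
  have hQ0 : 0 ≤ Q := Finset.sum_nonneg fun i _ => sq_nonneg _
  -- expansion of ‖Ax‖²
  have hexp : ∑ i, (A.mulVec x i) ^ 2
      = ∑ p, ∑ q, x p * x q * g p q := by
    have h1' : ∀ i, (A.mulVec x i) ^ 2
        = ∑ p, ∑ q, x p * x q * (A i p * A i q) := by
      intro i
      rw [Matrix.mulVec, dotProduct, sq, Finset.sum_mul_sum]
      exact Finset.sum_congr rfl fun p _ => Finset.sum_congr rfl fun q _ => by ring
    rw [Finset.sum_congr rfl fun i _ => h1' i, Finset.sum_comm]
    refine Finset.sum_congr rfl fun p _ => ?_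
    rw [Finset.sum_comm]
    refine Finset.sum_congr rfl fun q _ => ?_
    rw [hg, Finset.mul_sum]
  -- split into diagonal and off-diagonal
  set E : ℝ := ∑ p, ∑ q ∈ Finset.univ.erase p, x p * x q * g p q with hE
  have hsplit : ∑ i, (A.mulVec x i) ^ 2 = Q + E := by
    rw [hexp, hQ, hE, ← Finset.sum_add_distrib]
    refine Finset.sum_congr rfl fun p _ => ?_
    rw [← Finset.add_sum_erase _ _ (Finset.mem_univ p), hdiag p]
    ring_nf
  -- bound on |E|
  set T : ℝ := ∑ p, ∑ q ∈ Finset.univ.erase p, |x p| * |x q| with hT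
  have hEbound : |E| ≤ μ * T := by
    rw [hT, Finset.mul_sum]
    refine (Finset.abs_sum_le_sum_abs _ _).trans (Finset.sum_le_sum fun p _ => ?_)
    rw [Finset.mul_sum]
    refine (Finset.abs_sum_le_sum_abs _ _).trans (Finset.sum_le_sum fun q hq => ?_)
    have hpq : p ≠ q := (Finset.ne_of_mem_erase hq).symm
    calc |x p * x q * g p q| = |x p| * |x q| * |g p q| := by
          rw [abs_mul, abs_mul]
      _ ≤ |x p| * |x q| * μ := by
          exact mul_le_mul_of_nonneg_left (hoff p q hpq)
            (mul_nonneg (abs_nonneg _) (abs_nonneg _))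
      _ = μ * (|x p| * |x q|) := by ring
  -- bound T ≤ (k-1) Q
  set L : ℝ := ∑ p ∈ S, |x p| with hL
  have hQS : Q = ∑ p ∈ S, (x p) ^ 2 := by
    rw [hQ]
    refine (Finset.sum_subset (Finset.subset_univ S) fun p _ hp => ?_).symm
    have : x p = 0 := by simpa [hS] using hp
    simp [this]
  have hTval : T = L ^ 2 - Q := by
    have hTS : T = ∑ p ∈ S, ∑ q ∈ S.erase p, |x p| * |x q| := by
      rw [hT]
      refine (Finset.sum_subset (Finset.subset_univ S) fun p _ hp => ?_).symm.trans ?_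
      · have : x p = 0 := by simpa [hS] using hp
        simp [this]
      · refine Finset.sum_congr rfl fun p _ => ?_
        refine (Finset.sum_subset (Finset.erase_subset_erase p (Finset.subset_univ S))
          fun q hq hq' => ?_).symm
        have hqS : q ∉ S := fun h => hq' (Finset.mem_erase.mpr ⟨(Finset.mem_erase.mp hq).1, h⟩)
        have : x q = 0 := by simpa [hS] using hqS
        simp [this]
    rw [hTS, hQS, hL, sq, Finset.sum_mul_sum, ← Finset.sum_sub_distrib]
    refine Finset.sum_congr rfl fun p hp => ?_
    rw [← Finset.mul_sum, ← Finset.mul_sum,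
      ← Finset.add_sum_erase S (fun q => |x q|) hp, mul_add, abs_mul_abs_self]
    ring
  have hCS : L ^ 2 ≤ (S.card : ℝ) * Q := by
    have := Finset.sum_mul_sq_le_sq_mul_sq S (fun _ => (1:ℝ)) (fun p => |x p|)
    simp only [one_mul, one_pow, Finset.sum_const, nsmul_eq_mul, mul_one, sq_abs] at this
    rw [hL, hQS]
    simpa using this
  have hTbound : T ≤ ((k:ℝ) - 1) * Q := by
    rw [hTval]
    nlinarith [hCS, hSk, hQ0]
  -- conclude
  have hE1 : E ≤ μ * T := (le_abs_self E).trans hEbound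
  constructor <;> nlinarith [hsplit, hEbound, abs_nonneg E, neg_abs_le E, le_abs_self E,
    mul_le_mul_of_nonneg_left hTbound hμ0]
end

section
/- Let x ∈ ℝⁿ and let k ∈ ℕ with k ≤ n. Denote by ‖x‖_{1,k} the sum of the k largest values among |x₁|, …, |xₙ| (the largest-k norm). Then ‖x‖₀ ≤ k if and only if ‖x‖₁ − ‖x‖_{1,k} = 0, i.e., if and only if the ℓ₁-norm of x equals the sum of its k largest absolute entries. -/
/-- DC reformulation of the cardinality constraint: `‖x‖₀ ≤ k` iff `‖x‖₁ - ‖x‖_{1,k} = 0`,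
where the largest-`k` norm `‖x‖_{1,k}` (the sum of the `k` largest absolute entries of `x`)
is expressed as the maximum of `∑_{i ∈ T} |x i|` over all index sets `T` of size `k`. -/
theorem card_le_iff_largest_k_norm
    (n k : ℕ) (hk : k ≤ n) (x : Fin n → ℝ)
    (hne : ((Finset.univ : Finset (Fin n)).powersetCard k).Nonempty) :
    card0 x ≤ k ↔
      (∑ i, |x i|) -
        (((Finset.univ : Finset (Fin n)).powersetCard k).sup' hne
          (fun T => ∑ i ∈ T, |x i|)) = 0 := by
  set S : Finset (Fin n) := Finset.univ.filter (fun i => x i ≠ 0) with hS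
  have hcard0 : card0 x = S.card := by
    rw [card0, Set.ncard_eq_toFinset_card']
    congr 1
    ext i
    simp [hS]
  have hsup_le : (((Finset.univ : Finset (Fin n)).powersetCard k).sup' hne
      (fun T => ∑ i ∈ T, |x i|)) ≤ ∑ i, |x i| := by
    apply Finset.sup'_le
    intro T hT
    exact Finset.sum_le_sum_of_subset_of_nonneg (Finset.subset_univ T)
      (fun i _ _ => abs_nonneg _)
  constructor
  · intro h
    rw [hcard0] at h
    obtain ⟨T, hTS, hTcard⟩ := Finset.exists_superset_card_eq h (by simpa using hk)
    have hTmem : T ∈ (Finset.univ : Finset (Fin n)).powersetCard k := by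
      simp [Finset.mem_powersetCard, hTcard]
    have hsum : ∑ i ∈ T, |x i| = ∑ i, |x i| := by
      apply Finset.sum_subset (Finset.subset_univ T)
      intro i _ hiT
      have : x i = 0 := by
        by_contra hx
        exact hiT (hTS (by simp [hS, hx]))
      simp [this]
    have hge := Finset.le_sup' (f := fun T => ∑ i ∈ T, |x i|) hTmem
    rw [hsum] at hge
    linarith
  · intro h
    obtain ⟨T, hTmem, hTval⟩ := Finset.exists_mem_eq_sup' hne
      (fun T => ∑ i ∈ T, |x i|)
    rw [Finset.mem_powersetCard] at hTmem
    have hsum : ∑ i ∈ T, |x i| = ∑ i, |x i| := by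
      rw [hTval] at h; linarith
    have hzero : ∑ i ∈ Finset.univ \ T, |x i| = 0 := by
      have := Finset.sum_sdiff (f := fun i => |x i|) hTmem.1
      linarith
    have hSsub : S ⊆ T := by
      intro i hi
      by_contra hiT
      have hi0 : |x i| = 0 := by
        have : ∀ j ∈ Finset.univ \ T, |x j| = 0 :=
          (Finset.sum_eq_zero_iff_of_nonneg (fun j _ => abs_nonneg _)).1 hzero
        exact this i (by simp [hiT])
      simp [hS] at hi
      exact hi (abs_eq_zero.mp hi0)
    rw [hcard0]
    exact le_trans (Finset.card_le_card hSsub) hTmem.2.le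
end
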